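/- arXiv:1105.5263 — 4 statements merged into one kernel-verified Lean document; each statement's English description precedes it below -/
import Mathlib

section
/- With the nested partition structure below, let m_j, n_j be finite nonnegative measures of equal total mass supported on the level-j points L(j) = {x_{j,l} : 1 ≤ l ≤ m(j)}. Define measures on L(j−1) by m̃_{j−1}(x_{j−1,l'}) = Σ_{(j−1,l') → (j,l)} (m_j(x_{j,l}) − n_j(x_{j,l}))_+ and ñ_{j−1}(x_{j−1,l'}) = Σ_{(j−1,l') → (j,l)} (n_j(x_{j,l}) − m_j(x_{j,l}))_+. Then m̃_{j−1} and ñ_{j−1} have equal total mass, and W_p(m_j, n_j) ≤ 2^{1−1/p} · 4^{−j+2} · D · ( Σ_{l=1}^{m(j)} |m_j(x_{j,l}) − n_j(x_{j,l})| )^{1/p} + W_p(m̃_{j−1}, ñ_{j−1}). -/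
open MeasureTheory ProbabilityTheory Filter
open scoped ENNReal NNReal Classical

/-- The `p`-transport cost between two finite measures of equal total mass. -/
noncomputable def Wdist {E : Type*} [MeasurableSpace E] [PseudoMetricSpace E]
    (p : ℝ) (μ ν : Measure E) : ℝ :=
  sInf { c : ℝ | ∃ π : Measure (E × E), π.map Prod.fst = μ ∧ π.map Prod.snd = ν ∧
    c = (∫ z, dist z.1 z.2 ^ p ∂π) ^ (1 / p) }

section Helpers

variable {α : Type*} [MeasurableSpace α] [MeasurableSingletonClass α] {ι : Type*}

lemma sumDirac_apply (s : Finset ι) (c : ι → ℝ≥0∞) (z : ι → α) (A : Set α) :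
    (∑ i ∈ s, c i • Measure.dirac (z i)) A = ∑ i ∈ s, if z i ∈ A then c i else 0 := by
  rw [Measure.finset_sum_apply]
  refine Finset.sum_congr rfl fun i _ => ?_
  rw [Measure.smul_apply, Measure.dirac_apply]
  by_cases h : z i ∈ A <;> simp [h]

lemma measure_eq_sum_dirac (ρ : Measure α) (T : Finset α) (h : ρ ((↑T : Set α)ᶜ) = 0) :
    ρ = ∑ t ∈ T, ρ {t} • Measure.dirac t := by
  ext A hA
  rw [sumDirac_apply]
  have hTm : MeasurableSet (↑T : Set α) := T.measurableSet
  have h1 : ρ A = ρ (A ∩ ↑T) := by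
    have h3 := measure_inter_add_diff (μ := ρ) A hTm
    have h2 : ρ (A \ ↑T) = 0 :=
      le_antisymm (le_trans (measure_mono (Set.diff_subset_compl A ↑T)) h.le) (zero_le)
    rw [h2, add_zero] at h3
    exact h3.symm
  have h4 : A ∩ ↑T = ⋃ t ∈ T.filter (· ∈ A), ({t} : Set α) := by
    ext u
    simp only [Set.mem_inter_iff, Set.mem_iUnion, Finset.mem_filter, Set.mem_singleton_iff]
    constructor
    · rintro ⟨hu, ht⟩; exact ⟨u, ⟨ht, hu⟩, rfl⟩
    · rintro ⟨t, ⟨ht, hA'⟩, rfl⟩; exact ⟨hA', ht⟩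
  rw [h1, h4, measure_biUnion_finset ?hd (fun b _ => measurableSet_singleton b)]
  · rw [Finset.sum_filter]
  · intro u hu v hv huv
    exact Set.disjoint_singleton.mpr huv

lemma integrable_dirac'' {f : α → ℝ} (hf : StronglyMeasurable f) (a : α) :
    Integrable f (Measure.dirac a) := by
  refine ⟨hf.aestronglyMeasurable, ?_⟩
  rw [HasFiniteIntegral, lintegral_dirac]
  exact ENNReal.coe_lt_top

lemma integral_sumDirac (s : Finset ι) (c : ι → ℝ≥0∞) (hc : ∀ i ∈ s, c i ≠ ∞) (z : ι → α)
    (f : α → ℝ) (hf : StronglyMeasurable f) :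
    ∫ x, f x ∂(∑ i ∈ s, c i • Measure.dirac (z i)) = ∑ i ∈ s, (c i).toReal * f (z i) := by
  rw [integral_finset_sum_measure
    (fun i hi => (integrable_dirac'' hf (z i)).smul_measure (hc i hi))]
  refine Finset.sum_congr rfl fun i hi => ?_
  rw [integral_smul_measure, integral_dirac f (z i), smul_eq_mul]

lemma sumDirac_apply' (s : Finset α) (c : α → ℝ≥0∞) (A : Set α) :
    (∑ i ∈ s, c i • Measure.dirac i) A = ∑ i ∈ s, if i ∈ A then c i else 0 :=
  sumDirac_apply s c (fun i => i) A

lemma integral_sumDirac' (s : Finset α) (c : α → ℝ≥0∞) (hc : ∀ i ∈ s, c i ≠ ∞)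
    (f : α → ℝ) (hf : StronglyMeasurable f) :
    ∫ x, f x ∂(∑ i ∈ s, c i • Measure.dirac i) = ∑ i ∈ s, (c i).toReal * f i :=
  integral_sumDirac s c hc (fun i => i) f hf

omit [MeasurableSingletonClass α] in
lemma map_sumDirac {β : Type*} [MeasurableSpace β] (s : Finset ι) (c : ι → ℝ≥0∞) (z : ι → α)
    {f : α → β} (hf : Measurable f) :
    (∑ i ∈ s, c i • Measure.dirac (z i)).map f = ∑ i ∈ s, c i • Measure.dirac (f (z i)) := by
  classical
  induction s using Finset.induction with
  | empty => simp [Measure.map_zero]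
  | insert _ _ h ih =>
    rw [Finset.sum_insert h, Measure.map_add _ _ hf, Measure.map_smul, Measure.map_dirac' hf,
      Finset.sum_insert h, ih]

end Helpers


lemma wdist_set_nonneg {E : Type*} [MeasurableSpace E] [PseudoMetricSpace E] (p : ℝ)
    (μ ν : Measure E) {c : ℝ}
    (hc : c ∈ { c : ℝ | ∃ π : Measure (E × E), π.map Prod.fst = μ ∧ π.map Prod.snd = ν ∧
      c = (∫ z, dist z.1 z.2 ^ p ∂π) ^ (1 / p) }) : 0 ≤ c := by
  obtain ⟨π, -, -, rfl⟩ := hc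
  exact Real.rpow_nonneg (integral_nonneg fun z => Real.rpow_nonneg dist_nonneg _) _

lemma coe_sub_real (u v : ℝ≥0) : ((u - v : ℝ≥0) : ℝ) = max ((u:ℝ) - v) 0 := by
  rcases le_total v u with h | h
  · rw [NNReal.coe_sub h, max_eq_left (by simpa using h)]
  · rw [tsub_eq_zero_of_le h, max_eq_right (by simpa using h)]
    simp

lemma part2_aux {E : Type*} [MetricSpace E] [PolishSpace E] [MeasurableSpace E] [BorelSpace E]
    (p : ℝ) (hp : 1 ≤ p) (R : ℝ) (hR0 : 0 ≤ R)
    (S S' : Finset ℕ) (P : ℕ → ℕ → Prop) (z y : ℕ → E) (a b : ℕ → ℝ≥0) (par : ℕ → ℕ)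
    (hparS' : ∀ l ∈ S, par l ∈ S')
    (hifsumG : ∀ (f : ℕ → ℝ≥0∞), ∀ l ∈ S,
      (∑ l' ∈ S', if P l l' then f l' else 0) = f (par l))
    (hifsumN : ∀ (f : ℕ → ℝ≥0), ∀ l ∈ S,
      (∑ l' ∈ S', if P l l' then f l' else 0) = f (par l))
    (key : ∑ l ∈ S, (a l - b l) = ∑ l ∈ S, (b l - a l))
    (hdist : ∀ l ∈ S, dist (z l) (y (par l)) ≤ R) :
    Wdist p (∑ l ∈ S, ((a l : ℝ≥0∞) • Measure.dirac (z l)))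
        (∑ l ∈ S, ((b l : ℝ≥0∞) • Measure.dirac (z l))) ≤
      (2 : ℝ) ^ (1 - 1 / p) * R * (∑ l ∈ S, |(a l : ℝ) - (b l : ℝ)|) ^ (1 / p) +
        Wdist p
          (∑ l' ∈ S', (((∑ l ∈ S, (if P l l' then a l - b l else 0) : ℝ≥0) : ℝ≥0∞) •
              Measure.dirac (y l')))
          (∑ l' ∈ S', (((∑ l ∈ S, (if P l l' then b l - a l else 0) : ℝ≥0) : ℝ≥0∞) •
              Measure.dirac (y l'))) := by
  classical
  have hp0 : (0:ℝ) < p := lt_of_lt_of_le one_pos hp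
  set pt : ℕ → E := fun l => y (par l) with hpt
  set F' : Finset E := S'.image y with hF'
  set αp : ℕ → ℝ≥0∞ := fun l => ((a l - b l : ℝ≥0) : ℝ≥0∞) with hαp
  set βp : ℕ → ℝ≥0∞ := fun l => ((b l - a l : ℝ≥0) : ℝ≥0∞) with hβp
  set M : ℝ≥0 := ∑ l ∈ S, (a l - b l) with hM
  set μ : Measure E := ∑ l ∈ S, ((a l : ℝ≥0∞) • Measure.dirac (z l)) with hμ
  set ν : Measure E := ∑ l ∈ S, ((b l : ℝ≥0∞) • Measure.dirac (z l)) with hν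
  set μt : Measure E := ∑ l' ∈ S',
    (((∑ l ∈ S, (if P l l' then a l - b l else 0) : ℝ≥0) : ℝ≥0∞) • Measure.dirac (y l')) with hμt
  set νt : Measure E := ∑ l' ∈ S',
    (((∑ l ∈ S, (if P l l' then b l - a l else 0) : ℝ≥0) : ℝ≥0∞) • Measure.dirac (y l')) with hνt
  -- atom formulas
  have hatom : ∀ (c : ℕ → ℝ≥0) (u : E),
      ((∑ l' ∈ S', (((∑ l ∈ S, (if P l l' then c l else 0) : ℝ≥0) : ℝ≥0∞) •
        Measure.dirac (y l')) : Measure E)) {u}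
      = ∑ l ∈ S, if pt l = u then ((c l : ℝ≥0∞)) else 0 := by
    intro c u
    rw [sumDirac_apply]
    have step : ∀ l' ∈ S', (if y l' ∈ ({u} : Set E)
          then (((∑ l ∈ S, (if P l l' then c l else 0) : ℝ≥0) : ℝ≥0∞)) else 0)
        = ∑ l ∈ S, if P l l' then (if y l' = u then ((c l : ℝ≥0∞)) else 0) else 0 := by
      intro l' _
      push_cast
      simp only [Set.mem_singleton_iff]
      by_cases h : y l' = u
      · simp only [h, if_true]
        refine Finset.sum_congr rfl fun l _ => ?_
        split <;> simp
      · simp only [h, if_false]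
        rw [eq_comm, Finset.sum_eq_zero]
        intro l _
        split <;> simp [h]
    refine Eq.trans (Finset.sum_congr rfl fun l' hl' =>
      Eq.trans (if_congr Iff.rfl rfl rfl) (step l' hl')) ?_
    rw [Finset.sum_comm]
    refine Finset.sum_congr rfl fun l hl => ?_
    exact hifsumG (fun l' => if y l' = u then ((c l : ℝ≥0∞)) else 0) l hl
  have hA : ∀ u : E, μt {u} = ∑ l ∈ S, if pt l = u then αp l else 0 :=
    fun u => hatom (fun l => a l - b l) u
  have hB : ∀ u : E, νt {u} = ∑ l ∈ S, if pt l = u then βp l else 0 :=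
    fun u => hatom (fun l => b l - a l) u
  have hAfilter : ∀ u : E, μt {u} = ∑ l ∈ S.filter (fun l => pt l = u), αp l := by
    intro u; rw [hA u, Finset.sum_filter]
  have hBfilter : ∀ u : E, νt {u} = ∑ l ∈ S.filter (fun l => pt l = u), βp l := by
    intro u; rw [hB u, Finset.sum_filter]
  -- total masses
  have htotal : ∀ (c : ℕ → ℝ≥0),
      ((∑ l' ∈ S', (((∑ l ∈ S, (if P l l' then c l else 0) : ℝ≥0) : ℝ≥0∞) •
        Measure.dirac (y l')) : Measure E)) Set.univ
      = ((∑ l ∈ S, c l : ℝ≥0) : ℝ≥0∞) := by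
    intro c
    rw [sumDirac_apply]
    simp only [Set.mem_univ, if_true]
    push_cast
    rw [Finset.sum_comm]
    refine Finset.sum_congr rfl fun l hl => ?_
    rw [← hifsumG (fun _ => ((c l : ℝ≥0∞))) l hl]
    exact Finset.sum_congr rfl fun l' _ => by split <;> simp
  have hμt_univ : μt Set.univ = ((M : ℝ≥0∞)) := by
    rw [hμt, htotal (fun l => a l - b l), hM]
  have hνt_univ : νt Set.univ = ((M : ℝ≥0∞)) := by
    rw [hνt, htotal (fun l => b l - a l)]
    exact congrArg (fun t : ℝ≥0 => (t : ℝ≥0∞)) key.symm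
  have hcoeM_ne : ((M:ℝ≥0∞)) ≠ ∞ := ENNReal.coe_ne_top
  have hyF' : ∀ l' ∈ S', y l' ∈ F' := fun l' hl' => Finset.mem_image_of_mem y hl'
  have hptF' : ∀ l ∈ S, pt l ∈ F' := fun l hl => hyF' (par l) (hparS' l hl)
  have hconcG : ∀ (c : ℕ → ℝ≥0),
      ((∑ l' ∈ S', (((∑ l ∈ S, (if P l l' then c l else 0) : ℝ≥0) : ℝ≥0∞) •
        Measure.dirac (y l')) : Measure E)) ((↑F' : Set E)ᶜ) = 0 := by
    intro c
    rw [sumDirac_apply, Finset.sum_eq_zero]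
    intro l' hl'
    exact if_neg (fun h => h (hyF' l' hl'))
  have hμtF' : μt ((↑F' : Set E)ᶜ) = 0 := by rw [hμt]; exact hconcG _
  have hνtF' : νt ((↑F' : Set E)ᶜ) = 0 := by rw [hνt]; exact hconcG _
  haveI hμtfin : IsFiniteMeasure μt := ⟨by rw [hμt_univ]; exact ENNReal.coe_lt_top⟩
  haveI hνtfin : IsFiniteMeasure νt := ⟨by rw [hνt_univ]; exact ENNReal.coe_lt_top⟩
  have hbdd : ∀ (μ₁ ν₁ : Measure E), BddBelow {c : ℝ | ∃ π : Measure (E × E),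
      π.map Prod.fst = μ₁ ∧ π.map Prod.snd = ν₁ ∧
      c = (∫ z, dist z.1 z.2 ^ p ∂π) ^ (1 / p)} :=
    fun μ₁ ν₁ => ⟨0, fun c hc => wdist_set_nonneg p μ₁ ν₁ hc⟩
  have hWSne : Set.Nonempty {c : ℝ | ∃ π : Measure (E × E), π.map Prod.fst = μt ∧
      π.map Prod.snd = νt ∧ c = (∫ z, dist z.1 z.2 ^ p ∂π) ^ (1 / p)} := by
    by_cases hM0 : M = 0
    · have hμ0 : μt = 0 := Measure.measure_univ_eq_zero.mp (by rw [hμt_univ, hM0]; simp)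
      have hν0 : νt = 0 := Measure.measure_univ_eq_zero.mp (by rw [hνt_univ, hM0]; simp)
      exact ⟨_, ⟨(0 : Measure (E × E)), by rw [Measure.map_zero, hμ0],
        by rw [Measure.map_zero, hν0], rfl⟩⟩
    · have hMne : ((M:ℝ≥0∞)) ≠ 0 := ENNReal.coe_ne_zero.mpr hM0
      refine ⟨_, ⟨((M:ℝ≥0∞))⁻¹ • (μt.prod νt), ?_, ?_, rfl⟩⟩
      · rw [Measure.map_smul, Measure.map_fst_prod, hνt_univ, smul_smul,
          ENNReal.inv_mul_cancel hMne hcoeM_ne, one_smul]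
      · rw [Measure.map_smul, Measure.map_snd_prod, hμt_univ, smul_smul,
          ENNReal.inv_mul_cancel hMne hcoeM_ne, one_smul]
  refine _root_.le_of_forall_pos_le_add (fun ε hε => ?_)
  obtain ⟨ct, hctWS, hctlt⟩ := Real.lt_sInf_add_pos hWSne hε
  obtain ⟨πt, hπ1, hπ2, hcteq⟩ := hctWS
  -- concentration of πt on F' ×ˢ F'
  have hF'm : MeasurableSet (↑F' : Set E) := F'.measurableSet
  have hfst0 : πt ((Prod.fst ⁻¹' ((↑F' : Set E)ᶜ)) : Set (E × E)) = 0 := by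
    rw [← Measure.map_apply measurable_fst hF'm.compl, hπ1]
    exact hμtF'
  have hsnd0 : πt ((Prod.snd ⁻¹' ((↑F' : Set E)ᶜ)) : Set (E × E)) = 0 := by
    rw [← Measure.map_apply measurable_snd hF'm.compl, hπ2]
    exact hνtF'
  have hconc : πt ((↑(F' ×ˢ F') : Set (E × E))ᶜ) = 0 := by
    refine le_antisymm (le_trans (measure_mono
      (t := (Prod.fst ⁻¹' ((↑F' : Set E)ᶜ)) ∪ (Prod.snd ⁻¹' ((↑F' : Set E)ᶜ))) ?_) ?_)
      (zero_le)
    · intro q hq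
      simp only [Finset.coe_product, Set.mem_compl_iff, Set.mem_prod, not_and_or,
        Finset.mem_coe] at hq
      rcases hq with h | h
      · exact Set.mem_union_left _ (by simpa using h)
      · exact Set.mem_union_right _ (by simpa using h)
    · exact le_trans (measure_union_le _ _) (by rw [hfst0, hsnd0]; simp)
  set w : E × E → ℝ≥0∞ := fun q => πt {q} with hwdef
  have hdec : πt = ∑ q ∈ F' ×ˢ F', w q • Measure.dirac q :=
    measure_eq_sum_dirac πt (F' ×ˢ F') hconc
  have hπuniv : πt Set.univ = ((M:ℝ≥0∞)) := by
    rw [← Set.preimage_univ (f := (Prod.fst : E × E → E)),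
      ← Measure.map_apply measurable_fst MeasurableSet.univ, hπ1, hμt_univ]
  have hwfin : ∀ q, w q ≠ ∞ := fun q =>
    (lt_of_le_of_lt (measure_mono (Set.subset_univ _))
      (by rw [hπuniv]; exact ENNReal.coe_lt_top)).ne
  have hwA : ∀ u v : E, w (u, v) ≤ μt {u} := by
    intro u v
    rw [← hπ1, Measure.map_apply measurable_fst (measurableSet_singleton u)]
    exact measure_mono (by simp)
  have hwB : ∀ u v : E, w (u, v) ≤ νt {v} := by
    intro u v
    rw [← hπ2, Measure.map_apply measurable_snd (measurableSet_singleton v)]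
    exact measure_mono (by simp)
  have hAw : ∀ u ∈ F', μt {u} = ∑ v ∈ F', w (u, v) := by
    intro u hu
    have h1 : μt {u} = πt (Prod.fst ⁻¹' {u}) := by
      rw [← hπ1, Measure.map_apply measurable_fst (measurableSet_singleton u)]
    rw [h1, hdec, sumDirac_apply', Finset.sum_product,
      Finset.sum_eq_single_of_mem u hu (fun u' _ hne =>
        Finset.sum_eq_zero fun v _ => if_neg (by simp [hne]))]
    exact Finset.sum_congr rfl fun v hv => if_pos (by simp)
  have hBw : ∀ v ∈ F', νt {v} = ∑ u ∈ F', w (u, v) := by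
    intro v hv
    have h1 : νt {v} = πt (Prod.snd ⁻¹' {v}) := by
      rw [← hπ2, Measure.map_apply measurable_snd (measurableSet_singleton v)]
    rw [h1, hdec, sumDirac_apply', Finset.sum_product]
    refine Finset.sum_congr rfl fun u hu => ?_
    rw [Finset.sum_eq_single_of_mem v hv (fun v' _ hne => if_neg (by simp [hne]))]
    exact if_pos (by simp)
  -- finiteness and domination facts
  have hαA : ∀ l ∈ S, αp l ≤ μt {pt l} := by
    intro l hl
    rw [hAfilter]
    exact Finset.single_le_sum (f := fun l => αp l) (fun _ _ => zero_le)
      (Finset.mem_filter.mpr ⟨hl, rfl⟩)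
  have hβB : ∀ l ∈ S, βp l ≤ νt {pt l} := by
    intro l hl
    rw [hBfilter]
    exact Finset.single_le_sum (f := fun l => βp l) (fun _ _ => zero_le)
      (Finset.mem_filter.mpr ⟨hl, rfl⟩)
  have hAfin : ∀ u : E, μt {u} ≠ ∞ := fun u =>
    (lt_of_le_of_lt (measure_mono (Set.subset_univ _))
      (by rw [hμt_univ]; exact ENNReal.coe_lt_top)).ne
  have hBfin : ∀ u : E, νt {u} ≠ ∞ := fun u =>
    (lt_of_le_of_lt (measure_mono (Set.subset_univ _))
      (by rw [hνt_univ]; exact ENNReal.coe_lt_top)).ne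
  set q : ℕ × ℕ → ℝ≥0∞ := fun r =>
    (αp r.1 / μt {pt r.1}) * ((βp r.2 / νt {pt r.2}) * w (pt r.1, pt r.2)) with hqdef
  have hrow : ∀ l ∈ S, ∑ l'' ∈ S, q (l, l'') = αp l := by
    intro l hl
    have hinner : ∑ l'' ∈ S, (βp l'' / νt {pt l''}) * w (pt l, pt l'') = μt {pt l} := by
      rw [← Finset.sum_fiberwise_of_maps_to (g := pt) (t := F') (fun l'' hl'' => hptF' l'' hl'')
        (fun l'' => (βp l'' / νt {pt l''}) * w (pt l, pt l'')), hAw (pt l) (hptF' l hl)]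
      refine Finset.sum_congr rfl fun v hv => ?_
      have hc : ∀ l'' ∈ S.filter (fun l'' => pt l'' = v),
          (βp l'' / νt {pt l''}) * w (pt l, pt l'') = βp l'' * (νt {v})⁻¹ * w (pt l, v) := by
        intro l'' h
        rw [(Finset.mem_filter.mp h).2, div_eq_mul_inv]
      rw [Finset.sum_congr rfl hc, ← Finset.sum_mul, ← Finset.sum_mul]
      by_cases hv0 : νt {v} = 0
      · have hw0 : w (pt l, v) = 0 := le_antisymm (hv0 ▸ hwB (pt l) v) (zero_le)
        rw [hw0, mul_zero]
      · rw [← hBfilter v, ENNReal.mul_inv_cancel hv0 (hBfin v), one_mul]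
    calc ∑ l'' ∈ S, q (l, l'')
        = (αp l / μt {pt l}) * ∑ l'' ∈ S, (βp l'' / νt {pt l''}) * w (pt l, pt l'') := by
          rw [Finset.mul_sum]
      _ = (αp l / μt {pt l}) * μt {pt l} := by rw [hinner]
      _ = αp l := by
          by_cases h0 : μt {pt l} = 0
          · have hα0 : αp l = 0 := le_antisymm (h0 ▸ hαA l hl) (zero_le)
            rw [h0, hα0, mul_zero]
          · exact ENNReal.div_mul_cancel h0 (hAfin _)
  have hcol : ∀ l'' ∈ S, ∑ l ∈ S, q (l, l'') = βp l'' := by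
    intro l'' hl''
    rw [← Finset.sum_fiberwise_of_maps_to (g := pt) (t := F') (fun l hl => hptF' l hl)
      (fun l => q (l, l''))]
    have h3 : ∀ u ∈ F', ∑ l ∈ S.filter (fun l => pt l = u), q (l, l'')
        = (βp l'' / νt {pt l''}) * w (u, pt l'') := by
      intro u hu
      have hc : ∀ l ∈ S.filter (fun l => pt l = u),
          q (l, l'') = αp l * ((μt {u})⁻¹ * ((βp l'' / νt {pt l''}) * w (u, pt l''))) := by
        intro l h
        show (αp l / μt {pt l}) * ((βp l'' / νt {pt l''}) * w (pt l, pt l'')) = _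
        rw [(Finset.mem_filter.mp h).2, div_eq_mul_inv, mul_assoc]
      rw [Finset.sum_congr rfl hc, ← Finset.sum_mul, ← hAfilter u]
      by_cases h0 : μt {u} = 0
      · have hw0 : w (u, pt l'') = 0 := le_antisymm (h0 ▸ hwA u (pt l'')) (zero_le)
        rw [hw0, mul_zero, mul_zero, h0, zero_mul]
      · rw [← mul_assoc, ENNReal.mul_inv_cancel h0 (hAfin u), one_mul]
    rw [Finset.sum_congr rfl h3, ← Finset.mul_sum, ← hBw (pt l'') (hptF' l'' hl'')]
    by_cases h0 : νt {pt l''} = 0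
    · have hβ0 : βp l'' = 0 := le_antisymm (h0 ▸ hβB l'' hl'') (zero_le)
      rw [h0, hβ0, mul_zero]
    · exact ENNReal.div_mul_cancel h0 (hBfin _)
  -- q is finite on S ×ˢ S
  have hself : ∀ t : ℝ≥0∞, t ≠ ∞ → t * t⁻¹ ≤ 1 := by
    intro t ht
    by_cases h0 : t = 0
    · rw [h0]; simp
    · rw [ENNReal.mul_inv_cancel h0 ht]
  have hdivA : ∀ l ∈ S, αp l / μt {pt l} ≤ 1 := fun l hl =>
    le_trans (ENNReal.div_le_div_right (hαA l hl) _) ENNReal.div_self_le_one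
  have hdivB : ∀ l ∈ S, βp l / νt {pt l} ≤ 1 := fun l hl =>
    le_trans (ENNReal.div_le_div_right (hβB l hl) _) ENNReal.div_self_le_one
  have hqle : ∀ r ∈ S ×ˢ S, q r ≤ w (pt r.1, pt r.2) := by
    intro r hr
    obtain ⟨h1, h2⟩ := Finset.mem_product.mp hr
    calc q r ≤ 1 * (1 * w (pt r.1, pt r.2)) :=
          mul_le_mul' (hdivA r.1 h1) (mul_le_mul' (hdivB r.2 h2) le_rfl)
      _ = w (pt r.1, pt r.2) := by rw [one_mul, one_mul]
  have hqfin : ∀ r ∈ S ×ˢ S, q r ≠ ∞ := fun r hr =>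
    ne_top_of_le_ne_top (hwfin _) (hqle r hr)
  -- the coupling
  set πc : Measure (E × E) :=
    (∑ l ∈ S, ((min (a l) (b l) : ℝ≥0) : ℝ≥0∞) • Measure.dirac (z l, z l))
      + ∑ r ∈ S ×ˢ S, q r • Measure.dirac (z r.1, z r.2) with hπc
  have hmin_add_α : ∀ l : ℕ, ((min (a l) (b l) : ℝ≥0) : ℝ≥0∞) + αp l = ((a l : ℝ≥0∞)) := by
    intro l
    rw [hαp, ← ENNReal.coe_add, ENNReal.coe_inj]
    rcases le_total (a l) (b l) with h | h
    · rw [min_eq_left h, tsub_eq_zero_of_le h, add_zero]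
    · rw [min_eq_right h, add_comm, tsub_add_cancel_of_le h]
  have hmin_add_β : ∀ l : ℕ, ((min (a l) (b l) : ℝ≥0) : ℝ≥0∞) + βp l = ((b l : ℝ≥0∞)) := by
    intro l
    rw [hβp, ← ENNReal.coe_add, ENNReal.coe_inj]
    rcases le_total (b l) (a l) with h | h
    · rw [min_eq_right h, tsub_eq_zero_of_le h, add_zero]
    · rw [min_eq_left h, add_comm, tsub_add_cancel_of_le h]
  have hπcfst : πc.map Prod.fst = μ := by
    rw [hπc, Measure.map_add _ _ measurable_fst,
      map_sumDirac S _ (fun l => ((z l, z l) : E × E)) measurable_fst,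
      map_sumDirac (S ×ˢ S) q (fun r => ((z r.1, z r.2) : E × E)) measurable_fst]
    have h2 : (∑ r ∈ S ×ˢ S, q r • Measure.dirac ((fun r : ℕ × ℕ =>
        ((z r.1, z r.2) : E × E)) r).1 : Measure E)
        = ∑ l ∈ S, αp l • Measure.dirac (z l) := by
      rw [Finset.sum_product]
      refine Finset.sum_congr rfl fun l hl => ?_
      show ∑ l'' ∈ S, q (l, l'') • Measure.dirac (z l) = αp l • Measure.dirac (z l)
      rw [← Finset.sum_smul, hrow l hl]
    rw [h2, ← Finset.sum_add_distrib, hμ]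
    refine Finset.sum_congr rfl fun l hl => ?_
    rw [← add_smul, hmin_add_α l]
  have hπcsnd : πc.map Prod.snd = ν := by
    rw [hπc, Measure.map_add _ _ measurable_snd,
      map_sumDirac S _ (fun l => ((z l, z l) : E × E)) measurable_snd,
      map_sumDirac (S ×ˢ S) q (fun r => ((z r.1, z r.2) : E × E)) measurable_snd]
    have h2 : (∑ r ∈ S ×ˢ S, q r • Measure.dirac ((fun r : ℕ × ℕ =>
        ((z r.1, z r.2) : E × E)) r).2 : Measure E)
        = ∑ l'' ∈ S, βp l'' • Measure.dirac (z l'') := by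
      rw [Finset.sum_product, Finset.sum_comm]
      refine Finset.sum_congr rfl fun l'' hl'' => ?_
      show ∑ l ∈ S, q (l, l'') • Measure.dirac (z l'') = βp l'' • Measure.dirac (z l'')
      rw [← Finset.sum_smul, hcol l'' hl'']
    rw [h2, ← Finset.sum_add_distrib, hν]
    refine Finset.sum_congr rfl fun l hl => ?_
    rw [← add_smul, hmin_add_β l]
  -- cost computations
  have hcont : Continuous (fun zz : E × E => dist zz.1 zz.2 ^ p) :=
    (continuous_fst.dist continuous_snd).rpow_const (fun _ => Or.inr (le_of_lt hp0))
  have hsm := hcont.stronglyMeasurable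
  have hmin_fin : ∀ l ∈ S, ((min (a l) (b l) : ℝ≥0) : ℝ≥0∞) ≠ ∞ := fun l _ => ENNReal.coe_ne_top
  have hcostπc : ∫ zz, dist zz.1 zz.2 ^ p ∂πc
      = ∑ r ∈ S ×ˢ S, (q r).toReal * dist (z r.1) (z r.2) ^ p := by
    rw [hπc, integral_add_measure
      (integrable_finset_sum_measure.mpr fun i hi =>
        (integrable_dirac'' hsm _).smul_measure (hmin_fin i hi))
      (integrable_finset_sum_measure.mpr fun i hi =>
        (integrable_dirac'' hsm _).smul_measure (hqfin i hi)),
      integral_sumDirac S _ hmin_fin _ _ hsm, integral_sumDirac (S ×ˢ S) q hqfin _ _ hsm]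
    have h0 : ∑ l ∈ S, (((min (a l) (b l) : ℝ≥0) : ℝ≥0∞)).toReal
        * dist ((z l, z l) : E × E).1 ((z l, z l) : E × E).2 ^ p = 0 :=
      Finset.sum_eq_zero fun l _ => by
        simp [dist_self, Real.zero_rpow (ne_of_gt hp0)]
    rw [h0, zero_add]
  have hcostπt : ∫ zz, dist zz.1 zz.2 ^ p ∂πt
      = ∑ r ∈ F' ×ˢ F', (w r).toReal * dist r.1 r.2 ^ p := by
    rw [hdec, integral_sumDirac' _ _ (fun r _ => hwfin r) _ hsm]
  -- numeric facts
  set Mr : ℝ := ((M : ℝ≥0) : ℝ) with hMr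
  have hMr0 : 0 ≤ Mr := M.coe_nonneg
  have hqsumE : ∑ r ∈ S ×ˢ S, q r = ((M : ℝ≥0∞)) := by
    rw [Finset.sum_product, Finset.sum_congr rfl hrow, hM, ENNReal.coe_finset_sum]
  have hqsum : ∑ r ∈ S ×ˢ S, (q r).toReal = Mr := by
    rw [← ENNReal.toReal_sum hqfin, hqsumE, ENNReal.coe_toReal]
  have hMμsum : Mr = ∑ l ∈ S, max ((a l : ℝ) - b l) 0 := by
    rw [hMr, hM, NNReal.coe_sum]
    exact Finset.sum_congr rfl fun l _ => coe_sub_real _ _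
  have hMνsum : Mr = ∑ l ∈ S, max ((b l : ℝ) - a l) 0 := by
    rw [hMr, key, NNReal.coe_sum]
    exact Finset.sum_congr rfl fun l _ => coe_sub_real _ _
  have habs : ∑ l ∈ S, |(a l : ℝ) - (b l : ℝ)| = 2 * Mr := by
    have h1 : ∀ l : ℕ, |(a l : ℝ) - b l| = max ((a l:ℝ) - b l) 0 + max ((b l:ℝ) - a l) 0 := by
      intro l
      rcases le_total ((b l : ℝ)) (a l) with h | h
      · rw [abs_of_nonneg (by linarith), max_eq_left (by linarith),
          max_eq_right (by linarith)]; ring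
      · rw [abs_of_nonpos (by linarith), max_eq_right (by linarith),
          max_eq_left (by linarith)]; ring
    rw [Finset.sum_congr rfl (fun l _ => h1 l), Finset.sum_add_distrib, ← hMμsum, ← hMνsum]
    ring
  -- distance bound
  have hg : ∀ r ∈ S ×ˢ S, dist (z r.1) (z r.2) ≤ 2*R + dist (pt r.1) (pt r.2) := by
    intro r hr
    obtain ⟨h1, h2⟩ := Finset.mem_product.mp hr
    have d1 : dist (z r.1) (pt r.1) ≤ R := hdist r.1 h1
    have d2 : dist (z r.2) (pt r.2) ≤ R := hdist r.2 h2
    have t4 : dist (z r.1) (z r.2)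
        ≤ dist (z r.1) (pt r.1) + dist (pt r.1) (pt r.2) + dist (z r.2) (pt r.2) := by
      calc dist (z r.1) (z r.2)
          ≤ dist (z r.1) (pt r.1) + dist (pt r.1) (pt r.2) + dist (pt r.2) (z r.2) :=
            dist_triangle4 _ _ _ _
        _ = dist (z r.1) (pt r.1) + dist (pt r.1) (pt r.2) + dist (z r.2) (pt r.2) := by
            rw [dist_comm (pt r.2) (z r.2)]
    linarith
  set f1 : ℕ × ℕ → ℝ := fun r => (q r).toReal ^ (1/p) * (2*R) with hf1
  set f2 : ℕ × ℕ → ℝ := fun r => (q r).toReal ^ (1/p) * dist (pt r.1) (pt r.2) with hf2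
  have hql : ∀ r : ℕ × ℕ, ((q r).toReal ^ (1/p)) ^ p = (q r).toReal := by
    intro r
    rw [← Real.rpow_mul ENNReal.toReal_nonneg, one_div,
      inv_mul_cancel₀ (ne_of_gt hp0), Real.rpow_one]
  have hstep1 : ∑ r ∈ S ×ˢ S, (q r).toReal * dist (z r.1) (z r.2) ^ p
      ≤ ∑ r ∈ S ×ˢ S, (f1 r + f2 r) ^ p := by
    refine Finset.sum_le_sum fun r hr => ?_
    have hq0 : (0:ℝ) ≤ (q r).toReal := ENNReal.toReal_nonneg
    have e1 : f1 r + f2 r = (q r).toReal ^ (1/p) * (2*R + dist (pt r.1) (pt r.2)) := by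
      rw [hf1, hf2]; ring
    have hd0 : (0:ℝ) ≤ 2*R + dist (pt r.1) (pt r.2) := by
      have := dist_nonneg (x := pt r.1) (y := pt r.2); linarith
    rw [e1, Real.mul_rpow (Real.rpow_nonneg hq0 _) hd0, hql r]
    exact mul_le_mul_of_nonneg_left
      (Real.rpow_le_rpow dist_nonneg (hg r hr) (le_of_lt hp0)) hq0
  have hf1nn : ∀ r ∈ S ×ˢ S, (0:ℝ) ≤ f1 r := fun r _ =>
    mul_nonneg (Real.rpow_nonneg ENNReal.toReal_nonneg _) (by linarith)
  have hf2nn : ∀ r ∈ S ×ˢ S, (0:ℝ) ≤ f2 r := fun r _ =>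
    mul_nonneg (Real.rpow_nonneg ENNReal.toReal_nonneg _) dist_nonneg
  have hminkow := Real.Lp_add_le_of_nonneg (S ×ˢ S) (f := f1) (g := f2) hp hf1nn hf2nn
  have hsumf1 : (∑ r ∈ S ×ˢ S, f1 r ^ p) ^ (1/p) = (2*R) * Mr ^ (1/p) := by
    have e : ∀ r ∈ S ×ˢ S, f1 r ^ p = (q r).toReal * (2*R)^p := fun r _ => by
      rw [hf1, Real.mul_rpow (Real.rpow_nonneg ENNReal.toReal_nonneg _) (by linarith), hql r]
    rw [Finset.sum_congr rfl e, ← Finset.sum_mul, hqsum,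
      Real.mul_rpow hMr0 (Real.rpow_nonneg (by linarith) _),
      ← Real.rpow_mul (by linarith : (0:ℝ) ≤ 2*R), mul_one_div,
      div_self (ne_of_gt hp0), Real.rpow_one]
    ring
  have hsumf2 : ∀ r ∈ S ×ˢ S, f2 r ^ p = (q r).toReal * dist (pt r.1) (pt r.2) ^ p := by
    intro r _
    rw [hf2, Real.mul_rpow (Real.rpow_nonneg ENNReal.toReal_nonneg _) dist_nonneg, hql r]
  have hgroup : ∑ r ∈ S ×ˢ S, (q r).toReal * dist (pt r.1) (pt r.2) ^ p
      ≤ ∑ v ∈ F' ×ˢ F', (w v).toReal * dist v.1 v.2 ^ p := by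
    have hmaps : ∀ r ∈ S ×ˢ S, ((pt r.1, pt r.2) : E × E) ∈ F' ×ˢ F' := fun r hr => by
      obtain ⟨h1, h2⟩ := Finset.mem_product.mp hr
      exact Finset.mem_product.mpr ⟨hptF' _ h1, hptF' _ h2⟩
    rw [← Finset.sum_fiberwise_of_maps_to
      (g := fun r : ℕ × ℕ => ((pt r.1, pt r.2) : E × E)) hmaps
      (fun r => (q r).toReal * dist (pt r.1) (pt r.2) ^ p)]
    refine Finset.sum_le_sum fun v hv => ?_
    have hcongr : ∀ r ∈ (S ×ˢ S).filter (fun r => ((pt r.1, pt r.2) : E × E) = v),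
        (q r).toReal * dist (pt r.1) (pt r.2) ^ p = (q r).toReal * dist v.1 v.2 ^ p := by
      intro r h
      have h2 := (Finset.mem_filter.mp h).2
      have e1 : pt r.1 = v.1 := congrArg Prod.fst h2
      have e2 : pt r.2 = v.2 := congrArg Prod.snd h2
      rw [e1, e2]
    rw [Finset.sum_congr rfl hcongr, ← Finset.sum_mul]
    refine mul_le_mul_of_nonneg_right ?_ (Real.rpow_nonneg dist_nonneg _)
    rw [← ENNReal.toReal_sum (fun r h => hqfin r (Finset.filter_subset _ _ h))]
    refine ENNReal.toReal_mono (hwfin v) ?_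
    -- the mass bound
    have hfeq : (S ×ˢ S).filter (fun r => ((pt r.1, pt r.2) : E × E) = v)
        = (S.filter fun l => pt l = v.1) ×ˢ (S.filter fun l => pt l = v.2) := by
      ext r
      simp only [Finset.mem_filter, Finset.mem_product, Prod.ext_iff]
      tauto
    rw [hfeq, Finset.sum_product]
    have hqv : ∀ l ∈ S.filter (fun l => pt l = v.1), ∀ l'' ∈ S.filter (fun l => pt l = v.2),
        q (l, l'') = αp l * ((μt {v.1})⁻¹ * (βp l'' * ((νt {v.2})⁻¹ * w v))) := by
      intro l hl l'' hl''
      have e1 := (Finset.mem_filter.mp hl).2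
      have e2 := (Finset.mem_filter.mp hl'').2
      show (αp l / μt {pt l}) * ((βp l'' / νt {pt l''}) * w (pt l, pt l'')) = _
      rw [e1, e2, div_eq_mul_inv, div_eq_mul_inv, Prod.mk.eta]
      ring
    calc ∑ l ∈ S.filter (fun l => pt l = v.1), ∑ l'' ∈ S.filter (fun l => pt l = v.2), q (l, l'')
        = (∑ l ∈ S.filter (fun l => pt l = v.1), αp l) *
            ((μt {v.1})⁻¹ * ((∑ l'' ∈ S.filter (fun l => pt l = v.2), βp l'') *
              ((νt {v.2})⁻¹ * w v))) := by
          rw [Finset.sum_mul]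
          refine Finset.sum_congr rfl fun l hl => ?_
          rw [Finset.sum_congr rfl (hqv l hl), ← Finset.mul_sum, ← Finset.mul_sum,
            ← Finset.sum_mul]
      _ = μt {v.1} * ((μt {v.1})⁻¹ * (νt {v.2} * ((νt {v.2})⁻¹ * w v))) := by
          rw [← hAfilter, ← hBfilter]
      _ = (μt {v.1} * (μt {v.1})⁻¹) * ((νt {v.2} * (νt {v.2})⁻¹) * w v) := by ring
      _ ≤ 1 * (1 * w v) :=
          mul_le_mul' (hself _ (hAfin _)) (mul_le_mul' (hself _ (hBfin _)) le_rfl)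
      _ = w v := by rw [one_mul, one_mul]
  -- assembling
  have hchain : (∫ zz, dist zz.1 zz.2 ^ p ∂πc) ^ (1/p) ≤ (2*R) * Mr ^ (1/p) + ct := by
    rw [hcostπc, hcteq, hcostπt]
    calc (∑ r ∈ S ×ˢ S, (q r).toReal * dist (z r.1) (z r.2) ^ p) ^ (1/p)
        ≤ (∑ r ∈ S ×ˢ S, (f1 r + f2 r) ^ p) ^ (1/p) :=
          Real.rpow_le_rpow
            (Finset.sum_nonneg fun r _ => mul_nonneg ENNReal.toReal_nonneg
              (Real.rpow_nonneg dist_nonneg _)) hstep1 (by positivity)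
      _ ≤ (∑ r ∈ S ×ˢ S, f1 r ^ p) ^ (1/p) + (∑ r ∈ S ×ˢ S, f2 r ^ p) ^ (1/p) := hminkow
      _ = (2*R) * Mr ^ (1/p)
            + (∑ r ∈ S ×ˢ S, (q r).toReal * dist (pt r.1) (pt r.2) ^ p) ^ (1/p) := by
          rw [hsumf1, Finset.sum_congr rfl hsumf2]
      _ ≤ (2*R) * Mr ^ (1/p)
            + (∑ v ∈ F' ×ˢ F', (w v).toReal * dist v.1 v.2 ^ p) ^ (1/p) := by
          refine add_le_add le_rfl (Real.rpow_le_rpow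
            (Finset.sum_nonneg fun r _ => mul_nonneg ENNReal.toReal_nonneg
              (Real.rpow_nonneg dist_nonneg _)) hgroup (by positivity))
  have hfinal : Wdist p μ ν ≤ (2*R) * Mr ^ (1/p) + ct :=
    le_trans (csInf_le (hbdd μ ν) ⟨πc, hπcfst, hπcsnd, rfl⟩) hchain
  have hconst : (2:ℝ)^(1-1/p) * R * (∑ l ∈ S, |(a l : ℝ) - (b l : ℝ)|) ^ (1/p)
      = (2*R) * Mr ^ (1/p) := by
    rw [habs, Real.mul_rpow (by norm_num) hMr0]
    have h2 : (2:ℝ)^(1-1/p) * (2:ℝ)^(1/p) = 2 := by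
      rw [← Real.rpow_add (by norm_num : (0:ℝ) < 2)]
      norm_num
    calc (2:ℝ)^(1-1/p) * R * ((2:ℝ)^(1/p) * Mr^(1/p))
        = ((2:ℝ)^(1-1/p) * (2:ℝ)^(1/p)) * (R * Mr^(1/p)) := by ring
      _ = 2 * (R * Mr^(1/p)) := by rw [h2]
      _ = (2*R) * Mr^(1/p) := by ring
  have hWt : Wdist p μt νt = sInf {c : ℝ | ∃ π : Measure (E × E), π.map Prod.fst = μt ∧
      π.map Prod.snd = νt ∧ c = (∫ zz, dist zz.1 zz.2 ^ p ∂π) ^ (1 / p)} := rfl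
  rw [hconst, hWt]
  linarith


/-- Boissard, Lemma 2.2: one step of the transport estimate along a
nested sequence of partitions.  Measures at level `j` are encoded by their
(nonnegative) weights `a l`, `b l` at the points `x j l`, `1 ≤ l ≤ m j`; the measures
`m̃_{j-1}`, `ñ_{j-1}` are given by the weights `(a l - b l)₊`, `(b l - a l)₊`
summed over the tiles sitting inside a given tile of level `j - 1`
(truncated subtraction on `ℝ≥0` is exactly `(·)₊`). -/
theorem transport_step_nested_partitions
    {E : Type*} [MetricSpace E] [PolishSpace E] [MeasurableSpace E] [BorelSpace E]
    (p : ℝ) (hp : 1 ≤ p)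
    (X : Set E) (hXbdd : Bornology.IsBounded X) (D : ℝ) (hdiam : Metric.diam X = D)
    (k : ℕ) (m : ℕ → ℕ) (T : ℕ → ℕ → Set E) (x : ℕ → ℕ → E)
    -- nested partitions of X, 1 ≤ j ≤ k
    (hmem : ∀ j l, 1 ≤ j → j ≤ k → 1 ≤ l → l ≤ m j → x j l ∈ T j l)
    (hcover : ∀ j, 1 ≤ j → j ≤ k → (⋃ l ∈ Finset.Icc 1 (m j), T j l) = X)
    (hdisj : ∀ j, 1 ≤ j → j ≤ k → ∀ l l', 1 ≤ l → l ≤ m j → 1 ≤ l' → l' ≤ m j → l ≠ l' →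
      Disjoint (T j l) (T j l'))
    (hdiamT : ∀ j l, 1 ≤ j → j ≤ k → 1 ≤ l → l ≤ m j →
      Metric.diam (T j l) ≤ (4 : ℝ) ^ (-(j : ℤ) + 1) * D)
    (hnested : ∀ j, 1 < j → j ≤ k → ∀ l, 1 ≤ l → l ≤ m j →
      ∃ l', 1 ≤ l' ∧ l' ≤ m (j - 1) ∧ T j l ⊆ T (j - 1) l')
    -- a fixed level j with 2 ≤ j ≤ k
    (j : ℕ) (hj2 : 2 ≤ j) (hjk : j ≤ k)
    -- weights of the two measures at level j, with equal total mass
    (a b : ℕ → ℝ≥0)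
    (hmass : ∑ l ∈ Finset.Icc 1 (m j), a l = ∑ l ∈ Finset.Icc 1 (m j), b l) :
    (∑ l' ∈ Finset.Icc 1 (m (j - 1)),
        ∑ l ∈ Finset.Icc 1 (m j), (if T j l ⊆ T (j - 1) l' then a l - b l else 0)) =
      (∑ l' ∈ Finset.Icc 1 (m (j - 1)),
        ∑ l ∈ Finset.Icc 1 (m j), (if T j l ⊆ T (j - 1) l' then b l - a l else 0)) ∧
    Wdist p (∑ l ∈ Finset.Icc 1 (m j), ((a l : ℝ≥0∞) • Measure.dirac (x j l)))
        (∑ l ∈ Finset.Icc 1 (m j), ((b l : ℝ≥0∞) • Measure.dirac (x j l))) ≤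
      (2 : ℝ) ^ (1 - 1 / p) * (4 : ℝ) ^ (-(j : ℤ) + 2) * D *
          (∑ l ∈ Finset.Icc 1 (m j), |(a l : ℝ) - (b l : ℝ)|) ^ (1 / p) +
        Wdist p
          (∑ l' ∈ Finset.Icc 1 (m (j - 1)),
            (((∑ l ∈ Finset.Icc 1 (m j),
              (if T j l ⊆ T (j - 1) l' then a l - b l else 0) : ℝ≥0) : ℝ≥0∞) •
              Measure.dirac (x (j - 1) l')))
          (∑ l' ∈ Finset.Icc 1 (m (j - 1)),
            (((∑ l ∈ Finset.Icc 1 (m j),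
              (if T j l ⊆ T (j - 1) l' then b l - a l else 0) : ℝ≥0) : ℝ≥0∞) •
              Measure.dirac (x (j - 1) l'))) := by
  classical
  set S := Finset.Icc 1 (m j) with hS
  set S' := Finset.Icc 1 (m (j - 1)) with hS'
  have hj1 : (1:ℕ) ≤ j - 1 := by omega
  have hjk1 : j - 1 ≤ k := by omega
  have hpar0 : ∀ l ∈ S, ∃ l', 1 ≤ l' ∧ l' ≤ m (j-1) ∧ T j l ⊆ T (j-1) l' := fun l hl => by
    obtain ⟨h1, h2⟩ := Finset.mem_Icc.mp hl
    exact hnested j (by omega) hjk l h1 h2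
  choose! par hpar1 hpar2 hpar3 using hpar0
  have hparS' : ∀ l ∈ S, par l ∈ S' := fun l hl =>
    Finset.mem_Icc.mpr ⟨hpar1 l hl, hpar2 l hl⟩
  have hxmem : ∀ l ∈ S, x j l ∈ T j l := fun l hl => by
    obtain ⟨h1, h2⟩ := Finset.mem_Icc.mp hl
    exact hmem j l (by omega) hjk h1 h2
  have huniq : ∀ l ∈ S, ∀ l' ∈ S', T j l ⊆ T (j-1) l' → l' = par l := by
    intro l hl l' hl' hsub
    by_contra hne
    obtain ⟨h1, h2⟩ := Finset.mem_Icc.mp hl'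
    exact Set.disjoint_left.mp
      (hdisj (j-1) hj1 hjk1 l' (par l) h1 h2 (hpar1 l hl) (hpar2 l hl) hne)
      (hsub (hxmem l hl)) (hpar3 l hl (hxmem l hl))
  have hifsumG : ∀ (f : ℕ → ℝ≥0∞), ∀ l ∈ S,
      (∑ l' ∈ S', if T j l ⊆ T (j-1) l' then f l' else 0) = f (par l) := by
    intro f l hl
    rw [Finset.sum_eq_single_of_mem (par l) (hparS' l hl)]
    · exact if_pos (hpar3 l hl)
    · intro l' hl' hne
      exact if_neg (fun hsub => hne (huniq l hl l' hl' hsub))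
  have hifsumN : ∀ (f : ℕ → ℝ≥0), ∀ l ∈ S,
      (∑ l' ∈ S', if T j l ⊆ T (j-1) l' then f l' else 0) = f (par l) := by
    intro f l hl
    rw [Finset.sum_eq_single_of_mem (par l) (hparS' l hl)]
    · exact if_pos (hpar3 l hl)
    · intro l' hl' hne
      exact if_neg (fun hsub => hne (huniq l hl l' hl' hsub))
  have hmassR : ∑ l ∈ S, ((a l : ℝ)) = ∑ l ∈ S, ((b l : ℝ)) := by
    exact_mod_cast congrArg (fun t : ℝ≥0 => (t : ℝ)) hmass
  have key : ∑ l ∈ S, (a l - b l) = ∑ l ∈ S, (b l - a l) := by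
    rw [← NNReal.coe_inj]
    push_cast
    rw [Finset.sum_congr rfl (fun l _ => coe_sub_real (a l) (b l)),
      Finset.sum_congr rfl (fun l _ => coe_sub_real (b l) (a l))]
    have h1 : ∀ l : ℕ, max ((a l:ℝ) - b l) 0 - max ((b l:ℝ) - a l) 0 = (a l:ℝ) - b l := by
      intro l
      rcases le_total ((b l : ℝ)) (a l) with h | h
      · rw [max_eq_left (by linarith), max_eq_right (by linarith)]; ring
      · rw [max_eq_right (by linarith), max_eq_left (by linarith)]; ring
    have h2 : ∑ l ∈ S, (max ((a l:ℝ) - b l) 0 - max ((b l:ℝ) - a l) 0) = 0 := by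
      rw [Finset.sum_congr rfl (fun l _ => h1 l), Finset.sum_sub_distrib, hmassR]
      ring
    rw [Finset.sum_sub_distrib] at h2
    linarith
  constructor
  · rw [Finset.sum_comm, Finset.sum_comm (s := S')]
    rw [Finset.sum_congr rfl (fun l hl => hifsumN (fun _ => a l - b l) l hl),
      Finset.sum_congr rfl (fun l hl => hifsumN (fun _ => b l - a l) l hl)]
    exact key
  · have hD0 : 0 ≤ D := hdiam ▸ Metric.diam_nonneg
    have hR0 : 0 ≤ (4:ℝ) ^ (-(j:ℤ) + 2) * D := mul_nonneg (zpow_nonneg (by norm_num) _) hD0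
    have hdist : ∀ l ∈ S, dist (x j l) (x (j-1) (par l)) ≤ (4:ℝ) ^ (-(j:ℤ) + 2) * D := by
      intro l hl
      have hx1 : x j l ∈ T (j-1) (par l) := hpar3 l hl (hxmem l hl)
      have hx2 : x (j-1) (par l) ∈ T (j-1) (par l) :=
        hmem (j-1) (par l) hj1 hjk1 (hpar1 l hl) (hpar2 l hl)
      have hsubX : T (j-1) (par l) ⊆ X := by
        intro u hu
        rw [← hcover (j-1) hj1 hjk1]
        exact Set.mem_biUnion (hparS' l hl) hu
      have hbd : Bornology.IsBounded (T (j-1) (par l)) := hXbdd.subset hsubX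
      have h1 : dist (x j l) (x (j-1) (par l)) ≤ Metric.diam (T (j-1) (par l)) :=
        Metric.dist_le_diam_of_mem hbd hx1 hx2
      have h2 := hdiamT (j-1) (par l) hj1 hjk1 (hpar1 l hl) (hpar2 l hl)
      have hexp : (-(↑(j-1):ℤ) + 1) = (-(j:ℤ) + 2) := by
        push_cast [Nat.cast_sub (show 1 ≤ j by omega)]
        ring
      rw [hexp] at h2
      linarith
    have h := part2_aux p hp ((4:ℝ)^(-(j:ℤ)+2) * D) hR0 S S'
      (fun l l' => T j l ⊆ T (j-1) l') (fun l => x j l) (fun l' => x (j-1) l') a b par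
      hparS' hifsumG hifsumN key hdist
    rw [← mul_assoc ((2:ℝ)^(1-1/p)) ((4:ℝ)^(-(j:ℤ)+2)) D] at h
    exact h
end

section
/- With the nested partition structure below, let m_j, n_j be finite nonnegative measures of equal total mass supported on the level-j points L(j), and for 1 ≤ j' < j define their pushforwards to level j' by m_{j'}(x_{j',l'}) = Σ_{(j',l') → (j,l)} m_j(x_{j,l}) and n_{j'}(x_{j',l'}) = Σ_{(j',l') → (j,l)} n_j(x_{j,l}). Then W_p(m_j, n_j) ≤ Σ_{j'=1}^{j} 2^{1−1/p} · 4^{−j'+2} · D · ( Σ_{l=1}^{m(j')} |m_{j'}(x_{j',l}) − n_{j'}(x_{j',l})| )^{1/p}. -/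
open MeasureTheory ProbabilityTheory Filter
open scoped ENNReal NNReal Classical

open Finset

namespace BoissardAux

noncomputable def resid (L : Finset ℕ) (g : ℕ → ℕ → ℕ) (j : ℕ) (a b : ℕ → ℝ≥0) :
    ℕ → ℕ → ℝ≥0
  | 0, l => a l - b l
  | (k+1), l =>
      resid L g j a b k l *
        (((∑ l' ∈ L.filter (fun l' => g (j-k-1) l' = g (j-k-1) l), a l') -
          (∑ l' ∈ L.filter (fun l' => g (j-k-1) l' = g (j-k-1) l), b l')) /
         (∑ l' ∈ L.filter (fun l' => g (j-k-1) l' = g (j-k-1) l), resid L g j a b k l'))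

variable {L : Finset ℕ} {g : ℕ → ℕ → ℕ} {j : ℕ} {a b : ℕ → ℝ≥0}

lemma filter_fiber_eq (Hcompat : ∀ t l l', l ∈ L → l' ∈ L → g (t+1) l = g (t+1) l' → g t l = g t l')
    {t v c : ℕ} {l₀ : ℕ} (hl₀ : l₀ ∈ L) (hc : g (t+1) l₀ = c) (hv : g t l₀ = v) :
    (L.filter (fun l => g t l = v)).filter (fun l => g (t+1) l = c)
      = L.filter (fun l => g (t+1) l = c) := by
  ext l
  simp only [mem_filter, and_assoc]
  constructor
  · rintro ⟨h1, _, h3⟩; exact ⟨h1, h3⟩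
  · rintro ⟨h1, h3⟩
    exact ⟨h1, by rw [Hcompat t l l₀ h1 hl₀ (h3.trans hc.symm)]; exact hv, h3⟩

lemma sum_fiber_split {M : Type*} [AddCommMonoid M]
    (Hcompat : ∀ t l l', l ∈ L → l' ∈ L → g (t+1) l = g (t+1) l' → g t l = g t l')
    (t v : ℕ) (f : ℕ → M) :
    ∑ l ∈ L.filter (fun l => g t l = v), f l
      = ∑ c ∈ (L.filter (fun l => g t l = v)).image (g (t+1)),
          ∑ l ∈ L.filter (fun l => g (t+1) l = c), f l := by
  rw [← Finset.sum_fiberwise_of_maps_to (g := g (t+1))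
      (fun l hl => Finset.mem_image_of_mem _ hl)]
  refine Finset.sum_congr rfl (fun c hc => ?_)
  obtain ⟨l₀, hl₀, hc⟩ := Finset.mem_image.1 hc
  rw [filter_fiber_eq Hcompat (Finset.mem_filter.1 hl₀).1 hc (Finset.mem_filter.1 hl₀).2]

/-- F1: the sum of residuals over a fiber at the current level is the truncated
difference of the masses. -/
lemma sum_resid_fiber (Hgj : ∀ l ∈ L, g j l = l)
    (Hcompat : ∀ t l l', l ∈ L → l' ∈ L → g (t+1) l = g (t+1) l' → g t l = g t l') :
    ∀ k, k ≤ j → ∀ v,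
      ∑ l ∈ L.filter (fun l => g (j-k) l = v), resid L g j a b k l
        = (∑ l ∈ L.filter (fun l => g (j-k) l = v), a l)
          - (∑ l ∈ L.filter (fun l => g (j-k) l = v), b l) := by
  intro k
  induction k with
  | zero =>
    intro _ v
    simp only [Nat.sub_zero, resid]
    have hfe : L.filter (fun l => g j l = v) = L.filter (fun l => l = v) :=
      Finset.filter_congr (fun l hl => by rw [Hgj l hl])
    rw [hfe]
    have : L.filter (fun l => l = v) = if v ∈ L then {v} else ∅ := Finset.filter_eq' L v
    rw [this]
    split
    · simp
    · simp
  | succ k ih =>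
    intro hk v
    have hk' : k ≤ j := Nat.le_of_succ_le hk
    have hlev : j - k - 1 + 1 = j - k := by omega
    have hlev2 : j - (k+1) = j - k - 1 := by omega
    rw [hlev2]
    -- each summand: the filter in the definition is the fiber of v
    have hterm : ∀ l ∈ L.filter (fun l => g (j-k-1) l = v),
        resid L g j a b (k+1) l
          = resid L g j a b k l *
              (((∑ l' ∈ L.filter (fun l' => g (j-k-1) l' = v), a l') -
                (∑ l' ∈ L.filter (fun l' => g (j-k-1) l' = v), b l')) /
               (∑ l' ∈ L.filter (fun l' => g (j-k-1) l' = v), resid L g j a b k l')) := by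
      intro l hl
      have hv : g (j-k-1) l = v := (Finset.mem_filter.1 hl).2
      show resid L g j a b k l * _ = _
      rw [hv]
    rw [Finset.sum_congr rfl hterm, ← Finset.sum_mul]
    set Dv := ∑ l' ∈ L.filter (fun l' => g (j-k-1) l' = v), resid L g j a b k l' with hDv
    set Av := ∑ l' ∈ L.filter (fun l' => g (j-k-1) l' = v), a l'
    set Bv := ∑ l' ∈ L.filter (fun l' => g (j-k-1) l' = v), b l'
    -- split the fiber into level-(j-k) fibers
    have hsplit : ∀ f : ℕ → ℝ≥0,
        ∑ l ∈ L.filter (fun l => g (j-k-1) l = v), f l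
          = ∑ c ∈ (L.filter (fun l => g (j-k-1) l = v)).image (g (j-k)),
              ∑ l ∈ L.filter (fun l => g (j-k) l = c), f l := by
      intro f
      have := sum_fiber_split (g := g) (L := L) Hcompat (j-k-1) v f
      rwa [hlev] at this
    rcases eq_or_ne Dv 0 with hD0 | hD0
    · -- denominator zero: everything vanishes; also Av ≤ Bv
      have hAB : Av ≤ Bv := by
        have hsum := hsplit (fun l => resid L g j a b k l)
        rw [← hDv] at hsum
        have hchild : ∀ c ∈ (L.filter (fun l => g (j-k-1) l = v)).image (g (j-k)),
            (∑ l ∈ L.filter (fun l => g (j-k) l = c), a l)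
              ≤ ∑ l ∈ L.filter (fun l => g (j-k) l = c), b l := by
          intro c hc
          have h0 : ∑ l ∈ L.filter (fun l => g (j-k) l = c), resid L g j a b k l = 0 := by
            have := hsum.symm.trans hD0
            exact Finset.sum_eq_zero_iff.1 this c hc
          have := (ih hk' c).symm.trans h0
          exact tsub_eq_zero_iff_le.1 this
        calc Av = ∑ c ∈ (L.filter (fun l => g (j-k-1) l = v)).image (g (j-k)),
              ∑ l ∈ L.filter (fun l => g (j-k) l = c), a l := hsplit a
          _ ≤ ∑ c ∈ (L.filter (fun l => g (j-k-1) l = v)).image (g (j-k)),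
              ∑ l ∈ L.filter (fun l => g (j-k) l = c), b l :=
            Finset.sum_le_sum hchild
          _ = Bv := (hsplit b).symm
      rw [hD0, tsub_eq_zero_iff_le.2 hAB]
      simp
    · rw [div_eq_mul_inv, ← mul_assoc, mul_comm Dv, mul_assoc,
        mul_inv_cancel₀ hD0, mul_one]

/-- L4: residuals decrease along coarsening. -/
lemma resid_succ_le (Hgj : ∀ l ∈ L, g j l = l)
    (Hcompat : ∀ t l l', l ∈ L → l' ∈ L → g (t+1) l = g (t+1) l' → g t l = g t l')
    {k : ℕ} (hk : k + 1 ≤ j) {l : ℕ} (hl : l ∈ L) :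
    resid L g j a b (k+1) l ≤ resid L g j a b k l := by
  have hlev : j - k - 1 + 1 = j - k := by omega
  set v := g (j-k-1) l with hv
  set Dv := ∑ l' ∈ L.filter (fun l' => g (j-k-1) l' = v), resid L g j a b k l' with hDv
  set Av := ∑ l' ∈ L.filter (fun l' => g (j-k-1) l' = v), a l' with hAv
  set Bv := ∑ l' ∈ L.filter (fun l' => g (j-k-1) l' = v), b l' with hBv
  have hNle : Av - Bv ≤ Dv := by
    have hsplit : ∀ f : ℕ → ℝ≥0,
        ∑ l' ∈ L.filter (fun l' => g (j-k-1) l' = v), f l'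
          = ∑ c ∈ (L.filter (fun l' => g (j-k-1) l' = v)).image (g (j-k)),
              ∑ l' ∈ L.filter (fun l' => g (j-k) l' = c), f l' := by
      intro f
      have := sum_fiber_split (g := g) (L := L) Hcompat (j-k-1) v f
      rwa [hlev] at this
    rw [hAv, hBv, hDv, hsplit a, hsplit b,
      hsplit (fun l' => resid L g j a b k l')]
    rw [tsub_le_iff_right, ← Finset.sum_add_distrib]
    refine Finset.sum_le_sum (fun c _ => ?_)
    rw [sum_resid_fiber Hgj Hcompat k (Nat.le_of_succ_le hk) c]
    exact le_tsub_add
  show resid L g j a b k l * ((Av - Bv) / Dv) ≤ resid L g j a b k l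
  rcases eq_or_ne Dv 0 with hD0 | hD0
  · have : Av - Bv = 0 := le_antisymm (hD0 ▸ hNle) zero_le
    simp [this]
  · exact mul_le_of_le_one_right zero_le ((div_le_one (pos_iff_ne_zero.2 hD0)).2 hNle)

/-- L5: everything is matched at the root. -/
lemma resid_top_eq_zero (Hgj : ∀ l ∈ L, g j l = l) (Hg0 : ∀ l ∈ L, g 0 l = 0)
    (Hcompat : ∀ t l l', l ∈ L → l' ∈ L → g (t+1) l = g (t+1) l' → g t l = g t l')
    (hmass : ∑ l ∈ L, a l = ∑ l ∈ L, b l) {l : ℕ} (hl : l ∈ L) :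
    resid L g j a b j l = 0 := by
  have h0 := sum_resid_fiber (a := a) (b := b) Hgj Hcompat j le_rfl 0
  rw [Nat.sub_self] at h0
  have hfe : L.filter (fun l => g 0 l = 0) = L := by
    apply Finset.filter_true_of_mem; intro l hl; exact Hg0 l hl
  rw [hfe, hmass, tsub_self] at h0
  exact Finset.sum_eq_zero_iff.1 h0 l hl

/-- L6: telescoping sum of matched amounts. -/
lemma sum_matched (Hgj : ∀ l ∈ L, g j l = l) (Hg0 : ∀ l ∈ L, g 0 l = 0)
    (Hcompat : ∀ t l l', l ∈ L → l' ∈ L → g (t+1) l = g (t+1) l' → g t l = g t l')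
    (hmass : ∑ l ∈ L, a l = ∑ l ∈ L, b l) {l : ℕ} (hl : l ∈ L) :
    ∑ k ∈ Finset.range j, (resid L g j a b k l - resid L g j a b (k+1) l)
      = a l - b l := by
  have key : ∀ n ≤ j, ∑ k ∈ Finset.range n,
      (resid L g j a b k l - resid L g j a b (k+1) l)
        = resid L g j a b 0 l - resid L g j a b n l := by
    intro n hn
    have hbase : ∀ n, n ≤ j → resid L g j a b n l ≤ resid L g j a b 0 l := by
      intro n
      induction n with
      | zero => exact fun _ => le_rfl
      | succ n ih =>
        exact fun hn => (resid_succ_le Hgj Hcompat hn hl).trans (ih (Nat.le_of_succ_le hn))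
    induction n with
    | zero => simp
    | succ n ih =>
      rw [Finset.sum_range_succ, ih (Nat.le_of_succ_le hn)]
      exact tsub_add_tsub_cancel (hbase n (Nat.le_of_succ_le hn))
        (resid_succ_le Hgj Hcompat hn hl)
  have := key j le_rfl
  rw [this, resid_top_eq_zero Hgj Hg0 Hcompat hmass hl, tsub_zero]
  rfl

end BoissardAux
namespace BoissardAux2
open BoissardAux

variable {L : Finset ℕ} {g : ℕ → ℕ → ℕ} {j : ℕ} {a b : ℕ → ℝ≥0}

lemma coe_tsub (x y : ℝ≥0) : ((x - y : ℝ≥0) : ℝ) = max ((x:ℝ) - y) 0 := by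
  rw [NNReal.sub_def, Real.coe_toNNReal']

/-- L7: the matched mass at a node is the same on both sides. -/
lemma matched_eq (Hgj : ∀ l ∈ L, g j l = l)
    (Hcompat : ∀ t l l', l ∈ L → l' ∈ L → g (t+1) l = g (t+1) l' → g t l = g t l')
    {k : ℕ} (hk : k + 1 ≤ j) (v : ℕ) :
    ∑ l ∈ L.filter (fun l => g (j-k-1) l = v),
        (resid L g j a b k l - resid L g j a b (k+1) l)
      = ∑ l ∈ L.filter (fun l => g (j-k-1) l = v),
        (resid L g j b a k l - resid L g j b a (k+1) l) := by
  have hlev : j - k - 1 + 1 = j - k := by omega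
  have hlev2 : j - (k+1) = j - k - 1 := by omega
  have hsplit : ∀ f : ℕ → ℝ≥0,
      ∑ l ∈ L.filter (fun l => g (j-k-1) l = v), f l
        = ∑ c ∈ (L.filter (fun l => g (j-k-1) l = v)).image (g (j-k)),
            ∑ l ∈ L.filter (fun l => g (j-k) l = c), f l := by
    intro f
    have := sum_fiber_split (g := g) (L := L) Hcompat (j-k-1) v f
    rwa [hlev] at this
  set C := (L.filter (fun l => g (j-k-1) l = v)).image (g (j-k)) with hC
  -- sums of residuals over the fiber, on both sides
  have hR : ∀ (a b : ℕ → ℝ≥0),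
      ((∑ l ∈ L.filter (fun l => g (j-k-1) l = v), resid L g j a b k l : ℝ≥0) : ℝ)
        = ∑ c ∈ C, max (((∑ l ∈ L.filter (fun l => g (j-k) l = c), a l : ℝ≥0) : ℝ)
            - ((∑ l ∈ L.filter (fun l => g (j-k) l = c), b l : ℝ≥0) : ℝ)) 0 := by
    intro a b
    rw [hsplit (fun l => resid L g j a b k l), NNReal.coe_sum]
    refine Finset.sum_congr rfl (fun c _ => ?_)
    rw [sum_resid_fiber Hgj Hcompat k (Nat.le_of_succ_le hk) c, coe_tsub]
  have hR1 : ∀ (a b : ℕ → ℝ≥0),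
      ((∑ l ∈ L.filter (fun l => g (j-k-1) l = v), resid L g j a b (k+1) l : ℝ≥0) : ℝ)
        = max (((∑ l ∈ L.filter (fun l => g (j-k-1) l = v), a l : ℝ≥0) : ℝ)
            - ((∑ l ∈ L.filter (fun l => g (j-k-1) l = v), b l : ℝ≥0) : ℝ)) 0 := by
    intro a b
    have := sum_resid_fiber (a := a) (b := b) Hgj Hcompat (k+1) hk v
    rw [hlev2] at this
    rw [this, coe_tsub]
  -- cast everything to ℝ
  rw [← NNReal.coe_inj, NNReal.coe_sum, NNReal.coe_sum]
  have hmono : ∀ (a b : ℕ → ℝ≥0), ∀ l ∈ L.filter (fun l => g (j-k-1) l = v),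
      ((resid L g j a b k l - resid L g j a b (k+1) l : ℝ≥0) : ℝ)
        = (resid L g j a b k l : ℝ) - (resid L g j a b (k+1) l : ℝ) := by
    intro a b l hl
    exact NNReal.coe_sub (resid_succ_le Hgj Hcompat hk (Finset.mem_filter.1 hl).1)
  rw [Finset.sum_congr rfl (hmono a b), Finset.sum_congr rfl (hmono b a),
    Finset.sum_sub_distrib, Finset.sum_sub_distrib, ← NNReal.coe_sum, ← NNReal.coe_sum,
    ← NNReal.coe_sum, ← NNReal.coe_sum, hR a b, hR b a, hR1 a b, hR1 b a]
  -- now a purely real identity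
  have habs : ∀ A B : ℝ, max (A - B) 0 - max (B - A) 0 = A - B := by
    intro A B
    rcases le_total A B with h | h
    · rw [max_eq_right (by linarith), max_eq_left (by linarith)]; ring
    · rw [max_eq_left (by linarith), max_eq_right (by linarith)]; ring
  have hsum : ∑ c ∈ C, (max (((∑ l ∈ L.filter (fun l => g (j-k) l = c), a l : ℝ≥0) : ℝ)
            - ((∑ l ∈ L.filter (fun l => g (j-k) l = c), b l : ℝ≥0) : ℝ)) 0
        - max (((∑ l ∈ L.filter (fun l => g (j-k) l = c), b l : ℝ≥0) : ℝ)
            - ((∑ l ∈ L.filter (fun l => g (j-k) l = c), a l : ℝ≥0) : ℝ)) 0)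
      = ((∑ l ∈ L.filter (fun l => g (j-k-1) l = v), a l : ℝ≥0) : ℝ)
        - ((∑ l ∈ L.filter (fun l => g (j-k-1) l = v), b l : ℝ≥0) : ℝ) := by
    rw [Finset.sum_congr rfl (fun c _ => habs _ _), Finset.sum_sub_distrib]
    rw [hsplit a, hsplit b, NNReal.coe_sum, NNReal.coe_sum]
  rw [Finset.sum_sub_distrib] at hsum
  have h2 := habs (((∑ l ∈ L.filter (fun l => g (j-k-1) l = v), a l : ℝ≥0) : ℝ))
    (((∑ l ∈ L.filter (fun l => g (j-k-1) l = v), b l : ℝ≥0) : ℝ))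
  linarith

end BoissardAux2
namespace BoissardAux3
open BoissardAux BoissardAux2 Finset
open scoped ENNReal NNReal Classical

/-- The coupling weights. -/
noncomputable def cw (L : Finset ℕ) (g : ℕ → ℕ → ℕ) (j : ℕ) (a b : ℕ → ℝ≥0)
    (l l' : ℕ) : ℝ≥0 :=
  (if l = l' then min (a l) (b l) else 0) +
  ∑ k ∈ Finset.range j,
    (if g (j-k-1) l = g (j-k-1) l' then
      (resid L g j a b k l - resid L g j a b (k+1) l) *
      (resid L g j b a k l' - resid L g j b a (k+1) l') /
      (∑ l'' ∈ L.filter (fun l'' => g (j-k-1) l'' = g (j-k-1) l),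
        (resid L g j a b k l'' - resid L g j a b (k+1) l''))
     else 0)

variable {L : Finset ℕ} {g : ℕ → ℕ → ℕ} {j : ℕ} {a b : ℕ → ℝ≥0}

/-- Row sum of the `k`-th layer of the coupling. -/
lemma sum_term (Hgj : ∀ l ∈ L, g j l = l)
    (Hcompat : ∀ t l l', l ∈ L → l' ∈ L → g (t+1) l = g (t+1) l' → g t l = g t l')
    {k : ℕ} (hk : k + 1 ≤ j) {l : ℕ} (hl : l ∈ L) :
    ∑ l' ∈ L, (if g (j-k-1) l = g (j-k-1) l' then
      (resid L g j a b k l - resid L g j a b (k+1) l) *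
      (resid L g j b a k l' - resid L g j b a (k+1) l') /
      (∑ l'' ∈ L.filter (fun l'' => g (j-k-1) l'' = g (j-k-1) l),
        (resid L g j a b k l'' - resid L g j a b (k+1) l''))
     else 0)
      = resid L g j a b k l - resid L g j a b (k+1) l := by
  have hcond : ∀ l' : ℕ, (g (j-k-1) l = g (j-k-1) l') ↔ (g (j-k-1) l' = g (j-k-1) l) :=
    fun l' => eq_comm
  rw [Finset.sum_congr rfl (fun l' _ => if_congr (hcond l') rfl rfl),
    ← Finset.sum_filter]
  rw [← Finset.sum_div, ← Finset.mul_sum,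
    ← matched_eq (a := a) (b := b) Hgj Hcompat hk (g (j-k-1) l)]
  set mden := ∑ l'' ∈ L.filter (fun l'' => g (j-k-1) l'' = g (j-k-1) l),
      (resid L g j a b k l'' - resid L g j a b (k+1) l'') with hmden
  rcases eq_or_ne mden 0 with h0 | h0
  · have hzero : resid L g j a b k l - resid L g j a b (k+1) l = 0 := by
      refine Finset.sum_eq_zero_iff.1 (hmden ▸ h0) l ?_
      exact Finset.mem_filter.2 ⟨hl, rfl⟩
    rw [h0, hzero]
    simp
  · rw [mul_div_assoc, div_self h0, mul_one]

/-- Right marginal of the coupling. -/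
lemma cw_row_sum (Hgj : ∀ l ∈ L, g j l = l) (Hg0 : ∀ l ∈ L, g 0 l = 0)
    (Hcompat : ∀ t l l', l ∈ L → l' ∈ L → g (t+1) l = g (t+1) l' → g t l = g t l')
    (hmass : ∑ l ∈ L, a l = ∑ l ∈ L, b l) {l : ℕ} (hl : l ∈ L) :
    ∑ l' ∈ L, cw L g j a b l l' = a l := by
  unfold cw
  rw [Finset.sum_add_distrib, Finset.sum_ite_eq L l _, if_pos hl, Finset.sum_comm]
  rw [Finset.sum_congr rfl (fun k hk => sum_term Hgj Hcompat (Finset.mem_range.1 hk) hl),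
    sum_matched Hgj Hg0 Hcompat hmass hl]
  rcases le_total (a l) (b l) with h | h
  · rw [min_eq_left h, tsub_eq_zero_iff_le.2 h, add_zero]
  · rw [min_eq_right h, add_tsub_cancel_of_le h]

/-- The coupling is symmetric under swapping the two measures. -/
lemma cw_symm (Hgj : ∀ l ∈ L, g j l = l)
    (Hcompat : ∀ t l l', l ∈ L → l' ∈ L → g (t+1) l = g (t+1) l' → g t l = g t l')
    {l l' : ℕ} (hl : l ∈ L) (hl' : l' ∈ L) :
    cw L g j a b l l' = cw L g j b a l' l := by
  unfold cw
  congr 1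
  · rcases eq_or_ne l l' with h | h
    · subst h; simp [min_comm]
    · rw [if_neg h, if_neg (Ne.symm h)]
  · refine Finset.sum_congr rfl (fun k hk => ?_)
    have hk' : k + 1 ≤ j := Finset.mem_range.1 hk
    rcases eq_or_ne (g (j-k-1) l) (g (j-k-1) l') with h | h
    · rw [if_pos h, if_pos h.symm, h,
        matched_eq (a := b) (b := a) Hgj Hcompat hk' (g (j-k-1) l')]
      rw [mul_comm]
    · rw [if_neg h, if_neg (Ne.symm h)]

/-- Left marginal of the coupling. -/
lemma cw_col_sum (Hgj : ∀ l ∈ L, g j l = l) (Hg0 : ∀ l ∈ L, g 0 l = 0)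
    (Hcompat : ∀ t l l', l ∈ L → l' ∈ L → g (t+1) l = g (t+1) l' → g t l = g t l')
    (hmass : ∑ l ∈ L, a l = ∑ l ∈ L, b l) {l' : ℕ} (hl' : l' ∈ L) :
    ∑ l ∈ L, cw L g j a b l l' = b l' := by
  rw [Finset.sum_congr rfl (fun l hl => cw_symm Hgj Hcompat hl hl')]
  exact cw_row_sum Hgj Hg0 Hcompat hmass.symm hl'

end BoissardAux3
namespace BoissardAux4
open BoissardAux BoissardAux2 BoissardAux3 Finset
open scoped ENNReal NNReal Classical

variable {L : Finset ℕ} {g : ℕ → ℕ → ℕ} {j : ℕ} {a b : ℕ → ℝ≥0}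

lemma cost_le {E : Type*} [PseudoMetricSpace E] (p : ℝ) (hp : 1 ≤ p) (y : ℕ → E)
    (Hgj : ∀ l ∈ L, g j l = l)
    (Hcompat : ∀ t l l', l ∈ L → l' ∈ L → g (t+1) l = g (t+1) l' → g t l = g t l')
    (hj : 1 ≤ j)
    (d : ℕ → ℝ) (hd : ∀ t, 0 ≤ d t)
    (hdist : ∀ t, t < j → ∀ l ∈ L, ∀ l' ∈ L, g t l = g t l' → dist (y l) (y l') ≤ d t)
    (V : ℕ → Finset ℕ) (hV : ∀ t, 1 ≤ t → t ≤ j → ∀ l ∈ L, g t l ∈ V t) :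
    ∑ l ∈ L, ∑ l' ∈ L, (cw L g j a b l l' : ℝ) * dist (y l) (y l') ^ p
      ≤ ∑ t ∈ Finset.Icc 1 j, d (t-1) ^ p *
          ∑ v ∈ V t, |((∑ l ∈ L.filter (fun l => g t l = v), a l : ℝ≥0) : ℝ)
            - ((∑ l ∈ L.filter (fun l => g t l = v), b l : ℝ≥0) : ℝ)| := by
  have hp0 : (0:ℝ) < p := lt_of_lt_of_le one_pos hp
  have hexp : ∀ l l', (cw L g j a b l l' : ℝ) * dist (y l) (y l') ^ p
      = ((if l = l' then min (a l) (b l) else 0 : ℝ≥0) : ℝ) * dist (y l) (y l') ^ p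
        + ∑ k ∈ Finset.range j,
          ((if g (j-k-1) l = g (j-k-1) l' then
            (resid L g j a b k l - resid L g j a b (k+1) l) *
            (resid L g j b a k l' - resid L g j b a (k+1) l') /
            (∑ l'' ∈ L.filter (fun l'' => g (j-k-1) l'' = g (j-k-1) l),
              (resid L g j a b k l'' - resid L g j a b (k+1) l''))
           else 0 : ℝ≥0) : ℝ) * dist (y l) (y l') ^ p := by
    intro l l'
    unfold cw
    rw [NNReal.coe_add, NNReal.coe_sum, add_mul, Finset.sum_mul]
  calc ∑ l ∈ L, ∑ l' ∈ L, (cw L g j a b l l' : ℝ) * dist (y l) (y l') ^ p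
      = ∑ k ∈ Finset.range j, ∑ l ∈ L, ∑ l' ∈ L,
            ((if g (j-k-1) l = g (j-k-1) l' then
              (resid L g j a b k l - resid L g j a b (k+1) l) *
              (resid L g j b a k l' - resid L g j b a (k+1) l') /
              (∑ l'' ∈ L.filter (fun l'' => g (j-k-1) l'' = g (j-k-1) l),
                (resid L g j a b k l'' - resid L g j a b (k+1) l''))
             else 0 : ℝ≥0) : ℝ) * dist (y l) (y l') ^ p := by
        rw [Finset.sum_congr rfl (fun l _ => Finset.sum_congr rfl (fun l' _ => hexp l l'))]
        rw [Finset.sum_congr rfl (fun l _ => Finset.sum_add_distrib),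
          Finset.sum_add_distrib]
        have hdiag : ∀ l ∈ L, ∑ l' ∈ L,
            ((if l = l' then min (a l) (b l) else 0 : ℝ≥0) : ℝ) * dist (y l) (y l') ^ p
              = 0 := by
          intro l _
          refine Finset.sum_eq_zero (fun l' _ => ?_)
          rcases eq_or_ne l l' with h | h
          · subst h; rw [dist_self, Real.zero_rpow (ne_of_gt hp0), mul_zero]
          · rw [if_neg h, NNReal.coe_zero, zero_mul]
        rw [Finset.sum_congr rfl hdiag, Finset.sum_const, smul_zero, zero_add]
        rw [Finset.sum_congr rfl (fun l _ => Finset.sum_comm), Finset.sum_comm]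
    _ ≤ ∑ k ∈ Finset.range j, d (j-k-1) ^ p *
          ∑ v ∈ V (j-k), |((∑ l ∈ L.filter (fun l => g (j-k) l = v), a l : ℝ≥0) : ℝ)
            - ((∑ l ∈ L.filter (fun l => g (j-k) l = v), b l : ℝ≥0) : ℝ)| := by
        refine Finset.sum_le_sum (fun k hk => ?_)
        have hk1 : k + 1 ≤ j := Finset.mem_range.1 hk
        have hdp : 0 ≤ d (j-k-1) ^ p := Real.rpow_nonneg (hd _) p
        calc ∑ l ∈ L, ∑ l' ∈ L,
              ((if g (j-k-1) l = g (j-k-1) l' then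
                (resid L g j a b k l - resid L g j a b (k+1) l) *
                (resid L g j b a k l' - resid L g j b a (k+1) l') /
                (∑ l'' ∈ L.filter (fun l'' => g (j-k-1) l'' = g (j-k-1) l),
                  (resid L g j a b k l'' - resid L g j a b (k+1) l''))
               else 0 : ℝ≥0) : ℝ) * dist (y l) (y l') ^ p
            ≤ ∑ l ∈ L, ((resid L g j a b k l : ℝ)) * d (j-k-1) ^ p := by
              refine Finset.sum_le_sum (fun l hl => ?_)
              calc ∑ l' ∈ L, ((if g (j-k-1) l = g (j-k-1) l' then
                      (resid L g j a b k l - resid L g j a b (k+1) l) *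
                      (resid L g j b a k l' - resid L g j b a (k+1) l') /
                      (∑ l'' ∈ L.filter (fun l'' => g (j-k-1) l'' = g (j-k-1) l),
                        (resid L g j a b k l'' - resid L g j a b (k+1) l''))
                     else 0 : ℝ≥0) : ℝ) * dist (y l) (y l') ^ p
                  ≤ ∑ l' ∈ L, ((if g (j-k-1) l = g (j-k-1) l' then
                      (resid L g j a b k l - resid L g j a b (k+1) l) *
                      (resid L g j b a k l' - resid L g j b a (k+1) l') /
                      (∑ l'' ∈ L.filter (fun l'' => g (j-k-1) l'' = g (j-k-1) l),
                        (resid L g j a b k l'' - resid L g j a b (k+1) l''))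
                     else 0 : ℝ≥0) : ℝ) * d (j-k-1) ^ p := by
                    refine Finset.sum_le_sum (fun l' hl' => ?_)
                    rcases eq_or_ne (g (j-k-1) l) (g (j-k-1) l') with h | h
                    · refine mul_le_mul_of_nonneg_left ?_ (NNReal.coe_nonneg _)
                      refine Real.rpow_le_rpow dist_nonneg ?_ (le_of_lt hp0)
                      exact hdist (j-k-1) (by omega) l hl l' hl' h
                    · rw [if_neg h, NNReal.coe_zero, zero_mul, zero_mul]
                _ = ((resid L g j a b k l - resid L g j a b (k+1) l : ℝ≥0) : ℝ)
                      * d (j-k-1) ^ p := by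
                    rw [← Finset.sum_mul, ← NNReal.coe_sum,
                      sum_term Hgj Hcompat hk1 hl]
                _ ≤ ((resid L g j a b k l : ℝ≥0) : ℝ) * d (j-k-1) ^ p := by
                    exact mul_le_mul_of_nonneg_right
                      (NNReal.coe_le_coe.2 tsub_le_self) hdp
          _ = ((∑ l ∈ L, resid L g j a b k l : ℝ≥0) : ℝ) * d (j-k-1) ^ p := by
              rw [← Finset.sum_mul, NNReal.coe_sum]
          _ ≤ (∑ v ∈ V (j-k), |((∑ l ∈ L.filter (fun l => g (j-k) l = v), a l : ℝ≥0) : ℝ)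
                - ((∑ l ∈ L.filter (fun l => g (j-k) l = v), b l : ℝ≥0) : ℝ)|)
              * d (j-k-1) ^ p := by
              refine mul_le_mul_of_nonneg_right ?_ hdp
              have hsplit : ∑ l ∈ L, resid L g j a b k l
                  = ∑ v ∈ L.image (g (j-k)), ∑ l ∈ L.filter (fun l => g (j-k) l = v),
                      resid L g j a b k l :=
                (Finset.sum_fiberwise_of_maps_to
                  (fun l hl => Finset.mem_image_of_mem _ hl) _).symm
              rw [hsplit, NNReal.coe_sum]
              have hterm : ∀ v ∈ L.image (g (j-k)),
                  ((∑ l ∈ L.filter (fun l => g (j-k) l = v), resid L g j a b k l : ℝ≥0) : ℝ)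
                    ≤ |((∑ l ∈ L.filter (fun l => g (j-k) l = v), a l : ℝ≥0) : ℝ)
                      - ((∑ l ∈ L.filter (fun l => g (j-k) l = v), b l : ℝ≥0) : ℝ)| := by
                intro v _
                rw [sum_resid_fiber Hgj Hcompat k (Nat.le_of_succ_le hk1) v, coe_tsub]
                rw [max_le_iff]
                constructor
                · exact le_abs_self _
                · exact abs_nonneg _
              refine le_trans (Finset.sum_le_sum hterm) ?_
              refine Finset.sum_le_sum_of_subset_of_nonneg ?_ (fun _ _ _ => abs_nonneg _)
              intro v hv
              obtain ⟨l, hl, rfl⟩ := Finset.mem_image.1 hv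
              exact hV (j-k) (by omega) (by omega) l hl
          _ = d (j-k-1) ^ p *
              ∑ v ∈ V (j-k), |((∑ l ∈ L.filter (fun l => g (j-k) l = v), a l : ℝ≥0) : ℝ)
                - ((∑ l ∈ L.filter (fun l => g (j-k) l = v), b l : ℝ≥0) : ℝ)| :=
            mul_comm _ _
    _ = ∑ t ∈ Finset.Icc 1 j, d (t-1) ^ p *
          ∑ v ∈ V t, |((∑ l ∈ L.filter (fun l => g t l = v), a l : ℝ≥0) : ℝ)
            - ((∑ l ∈ L.filter (fun l => g t l = v), b l : ℝ≥0) : ℝ)| := by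
        refine Finset.sum_nbij' (fun k => j - k) (fun t => j - t)
          (fun k hk => ?_) (fun t ht => ?_) (fun k hk => ?_) (fun t ht => ?_)
          (fun k hk => ?_)
        · simp only [Finset.mem_range] at hk; simp only [Finset.mem_Icc]; omega
        · simp only [Finset.mem_Icc] at ht; simp only [Finset.mem_range]; omega
        · simp only [Finset.mem_range] at hk; show j - (j - k) = k; omega
        · simp only [Finset.mem_Icc] at ht; show j - (j - t) = t; omega
        · simp only [Finset.mem_range] at hk
          congr 1

end BoissardAux4
namespace BoissardAux5
open MeasureTheory Finset
open scoped ENNReal NNReal Classical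

/-- Pushforward of a finite sum of measures. -/
lemma map_finset_sum {α β γ : Type*} [MeasurableSpace α] [MeasurableSpace β]
    (s : Finset γ) (μ : γ → Measure α) {f : α → β} (hf : Measurable f) :
    (∑ i ∈ s, μ i).map f = ∑ i ∈ s, (μ i).map f := by
  classical
  induction s using Finset.induction with
  | empty => simp
  | insert i s hni ih =>
    rw [Finset.sum_insert hni, Finset.sum_insert hni, Measure.map_add _ _ hf, ih]

lemma integrable_smul_dirac {α : Type*} [MeasurableSpace α]
    {f : α → ℝ} (hf : StronglyMeasurable f) (c : ℝ≥0) (z : α) :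
    Integrable f ((c : ℝ≥0∞) • Measure.dirac z) := by
  refine ⟨hf.aestronglyMeasurable, ?_⟩
  rw [HasFiniteIntegral, lintegral_smul_measure,
    lintegral_dirac' _ hf.measurable.enorm]
  exact ENNReal.mul_lt_top ENNReal.coe_lt_top ENNReal.coe_lt_top

lemma integral_smul_dirac {α : Type*} [MeasurableSpace α]
    {f : α → ℝ} (hf : StronglyMeasurable f) (c : ℝ≥0) (z : α) :
    ∫ x, f x ∂((c : ℝ≥0∞) • Measure.dirac z) = (c : ℝ) * f z := by
  rw [integral_smul_measure, integral_dirac' _ _ hf, ENNReal.coe_toReal, smul_eq_mul]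

end BoissardAux5
namespace BoissardAux6
open MeasureTheory Finset BoissardAux5
open scoped ENNReal NNReal Classical

lemma wdist_le_of_coupling
    {E : Type*} [MetricSpace E] [PolishSpace E] [MeasurableSpace E] [BorelSpace E]
    (p : ℝ) (hp : 1 ≤ p)
    (L : Finset ℕ) (y : ℕ → E) (a b : ℕ → ℝ≥0) (w : ℕ → ℕ → ℝ≥0)
    (hrow : ∀ l ∈ L, ∑ l' ∈ L, w l l' = a l)
    (hcol : ∀ l' ∈ L, ∑ l ∈ L, w l l' = b l') :
    Wdist p (∑ l ∈ L, ((a l : ℝ≥0∞) • Measure.dirac (y l)))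
        (∑ l ∈ L, ((b l : ℝ≥0∞) • Measure.dirac (y l)))
      ≤ (∑ l ∈ L, ∑ l' ∈ L, (w l l' : ℝ) * dist (y l) (y l') ^ p) ^ (1/p) := by
  have hp0 : (0:ℝ) ≤ p := le_trans zero_le_one hp
  have hcont : Continuous (fun z : E × E => dist z.1 z.2 ^ p) :=
    (continuous_fst.dist continuous_snd).rpow_const (fun z => Or.inr hp0)
  have hf : StronglyMeasurable (fun z : E × E => dist z.1 z.2 ^ p) :=
    hcont.stronglyMeasurable
  set π : Measure (E × E) :=
    ∑ l ∈ L, ∑ l' ∈ L, ((w l l' : ℝ≥0∞) • Measure.dirac (y l, y l')) with hπ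
  apply csInf_le
  · refine ⟨0, fun c hc => ?_⟩
    obtain ⟨π', _, _, rfl⟩ := hc
    exact Real.rpow_nonneg
      (integral_nonneg (fun z => Real.rpow_nonneg dist_nonneg _)) _
  · refine ⟨π, ?_, ?_, ?_⟩
    · rw [hπ, map_finset_sum _ _ measurable_fst]
      refine Finset.sum_congr rfl (fun l _ => ?_)
      rw [map_finset_sum _ _ measurable_fst]
      have : ∀ l' ∈ L, ((w l l' : ℝ≥0∞) • Measure.dirac (y l, y l')).map Prod.fst
          = (w l l' : ℝ≥0∞) • Measure.dirac (y l) := by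
        intro l' _
        rw [Measure.map_smul, Measure.map_dirac' measurable_fst]
      rw [Finset.sum_congr rfl this, ← Finset.sum_smul, ← ENNReal.coe_finset_sum,
        hrow l ‹l ∈ L›]
    · have h1 : ∀ l ∈ L, (∑ l' ∈ L, ((w l l' : ℝ≥0∞) • Measure.dirac (y l, y l'))).map Prod.snd
          = ∑ l' ∈ L, (w l l' : ℝ≥0∞) • Measure.dirac (y l') := by
        intro l _
        rw [map_finset_sum _ _ measurable_snd]
        exact Finset.sum_congr rfl (fun l' _ => by
          rw [Measure.map_smul, Measure.map_dirac' measurable_snd])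
      rw [hπ, map_finset_sum _ _ measurable_snd, Finset.sum_congr rfl h1, Finset.sum_comm]
      refine Finset.sum_congr rfl (fun l' hl' => ?_)
      rw [← Finset.sum_smul, ← ENNReal.coe_finset_sum, hcol l' hl']
    · congr 1
      rw [hπ, integral_finset_sum_measure (fun l _ =>
        integrable_finset_sum_measure.2 (fun l' _ => integrable_smul_dirac hf _ _))]
      refine Finset.sum_congr rfl (fun l _ => ?_)
      rw [integral_finset_sum_measure (fun l' _ => integrable_smul_dirac hf _ _)]
      exact Finset.sum_congr rfl (fun l' _ => (integral_smul_dirac hf (w l l') (y l, y l')).symm)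
end BoissardAux6
namespace BoissardAux7
open Finset
open scoped NNReal

lemma rpow_add_le {q : ℝ} (h0 : 0 < q) (h1 : q ≤ 1) {x y : ℝ} (hx : 0 ≤ x) (hy : 0 ≤ y) :
    (x + y) ^ q ≤ x ^ q + y ^ q := by
  have key := NNReal.rpow_add_le_add_rpow x.toNNReal y.toNNReal (le_of_lt h0) h1
  have := NNReal.coe_le_coe.2 key
  rw [NNReal.coe_rpow, NNReal.coe_add, NNReal.coe_add, NNReal.coe_rpow, NNReal.coe_rpow,
    Real.coe_toNNReal _ hx, Real.coe_toNNReal _ hy] at this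
  exact this

lemma rpow_sum_le {ι : Type*} (s : Finset ι) (f : ι → ℝ) (hf : ∀ i ∈ s, 0 ≤ f i)
    {q : ℝ} (h0 : 0 < q) (h1 : q ≤ 1) :
    (∑ i ∈ s, f i) ^ q ≤ ∑ i ∈ s, f i ^ q := by
  classical
  induction s using Finset.cons_induction with
  | empty => rw [Finset.sum_empty, Finset.sum_empty, Real.zero_rpow (ne_of_gt h0)]
  | cons i s hi ih =>
    rw [Finset.sum_cons, Finset.sum_cons]
    have hfs : 0 ≤ ∑ i ∈ s, f i :=
      Finset.sum_nonneg (fun i hi' => hf i (Finset.mem_cons_of_mem hi'))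
    refine le_trans (rpow_add_le h0 h1 (hf i (Finset.mem_cons_self _ _)) hfs) ?_
    exact add_le_add_right (ih (fun i hi' => hf i (Finset.mem_cons_of_mem hi'))) _

end BoissardAux7
open MeasureTheory ProbabilityTheory Filter
open scoped ENNReal NNReal Classical


/-- Boissard, Lemma 2.3: the full transport estimate along a nested
sequence of partitions.  Measures at level `j` are encoded by their weights `a l`,
`b l` at the points `x j l`, `1 ≤ l ≤ m j`; their pushforwards to level `j' < j` have
weights `∑_{l : T j l ⊆ T j' l'} a l` at `x j' l'` (for `j' = j`, since the level-`j`
tiles are disjoint and `x j l ∈ T j l`, this sum reduces to `a l'` as well). -/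
theorem transport_bound_nested_partitions
    {E : Type*} [MetricSpace E] [PolishSpace E] [MeasurableSpace E] [BorelSpace E]
    (p : ℝ) (hp : 1 ≤ p)
    (X : Set E) (hXbdd : Bornology.IsBounded X) (D : ℝ) (hdiam : Metric.diam X = D)
    (k : ℕ) (m : ℕ → ℕ) (T : ℕ → ℕ → Set E) (x : ℕ → ℕ → E)
    -- nested partitions of X, 1 ≤ j ≤ k
    (hmem : ∀ j l, 1 ≤ j → j ≤ k → 1 ≤ l → l ≤ m j → x j l ∈ T j l)
    (hcover : ∀ j, 1 ≤ j → j ≤ k → (⋃ l ∈ Finset.Icc 1 (m j), T j l) = X)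
    (hdisj : ∀ j, 1 ≤ j → j ≤ k → ∀ l l', 1 ≤ l → l ≤ m j → 1 ≤ l' → l' ≤ m j → l ≠ l' →
      Disjoint (T j l) (T j l'))
    (hdiamT : ∀ j l, 1 ≤ j → j ≤ k → 1 ≤ l → l ≤ m j →
      Metric.diam (T j l) ≤ (4 : ℝ) ^ (-(j : ℤ) + 1) * D)
    (hnested : ∀ j, 1 < j → j ≤ k → ∀ l, 1 ≤ l → l ≤ m j →
      ∃ l', 1 ≤ l' ∧ l' ≤ m (j - 1) ∧ T j l ⊆ T (j - 1) l')
    -- a fixed level j with 1 ≤ j ≤ k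
    (j : ℕ) (hj1 : 1 ≤ j) (hjk : j ≤ k)
    -- weights of the two measures at level j, with equal total mass
    (a b : ℕ → ℝ≥0)
    (hmass : ∑ l ∈ Finset.Icc 1 (m j), a l = ∑ l ∈ Finset.Icc 1 (m j), b l) :
    Wdist p (∑ l ∈ Finset.Icc 1 (m j), ((a l : ℝ≥0∞) • Measure.dirac (x j l)))
        (∑ l ∈ Finset.Icc 1 (m j), ((b l : ℝ≥0∞) • Measure.dirac (x j l))) ≤
      ∑ j' ∈ Finset.Icc 1 j,
        (2 : ℝ) ^ (1 - 1 / p) * (4 : ℝ) ^ (-(j' : ℤ) + 2) * D *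
          (∑ l' ∈ Finset.Icc 1 (m j'),
            |((∑ l ∈ Finset.Icc 1 (m j), (if T j l ⊆ T j' l' then a l else 0) : ℝ≥0) : ℝ) -
              ((∑ l ∈ Finset.Icc 1 (m j), (if T j l ⊆ T j' l' then b l else 0) : ℝ≥0) : ℝ)|)
            ^ (1 / p) := by
  classical
  have hp0 : (0:ℝ) < p := lt_of_lt_of_le one_pos hp
  have hD0 : (0:ℝ) ≤ D := hdiam ▸ Metric.diam_nonneg
  set L := Finset.Icc 1 (m j) with hL
  -- tiles are contained in X
  have hTsubX : ∀ t v, 1 ≤ t → t ≤ k → 1 ≤ v → v ≤ m t → T t v ⊆ X := by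
    intro t v ht1 ht2 hv1 hv2
    rw [← hcover t ht1 ht2]
    intro z hz
    exact Set.mem_biUnion (Finset.mem_Icc.2 ⟨hv1, hv2⟩) hz
  -- the parent map
  obtain ⟨par, hparspec⟩ : ∃ par : ℕ → ℕ → ℕ, ∀ t i, 1 < t → t ≤ k → 1 ≤ i → i ≤ m t →
      (1 ≤ par t i ∧ par t i ≤ m (t-1) ∧ T t i ⊆ T (t-1) (par t i)) := by
    choose f h1 h2 h3 using hnested
    refine ⟨fun t i => if h : 1 < t ∧ t ≤ k ∧ 1 ≤ i ∧ i ≤ m t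
        then f t h.1 h.2.1 i h.2.2.1 h.2.2.2 else 1, ?_⟩
    intro t i ht1 ht2 hi1 hi2
    have h : 1 < t ∧ t ≤ k ∧ 1 ≤ i ∧ i ≤ m t := ⟨ht1, ht2, hi1, hi2⟩
    simp only [dif_pos h]
    exact ⟨h1 t h.1 h.2.1 i h.2.2.1 h.2.2.2, h2 t h.1 h.2.1 i h.2.2.1 h.2.2.2,
      h3 t h.1 h.2.1 i h.2.2.1 h.2.2.2⟩
  -- iterated grouping
  obtain ⟨gg, hgg0, hggs⟩ : ∃ gg : ℕ → ℕ → ℕ, (∀ l, gg 0 l = l) ∧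
      (∀ s l, gg (s+1) l = par (j - s) (gg s l)) :=
    ⟨fun s => Nat.rec (fun l => l) (fun s ih l => par (j - s) (ih l)) s,
     fun l => rfl, fun s l => rfl⟩
  set g : ℕ → ℕ → ℕ := fun t l => if t = 0 then 0 else gg (j - t) l with hg
  -- main invariant along the iteration
  have hinv : ∀ s, s ≤ j - 1 → ∀ l ∈ L,
      1 ≤ gg s l ∧ gg s l ≤ m (j - s) ∧ T j l ⊆ T (j - s) (gg s l) := by
    intro s
    induction s with
    | zero =>
      intro _ l hl
      obtain ⟨hl1, hl2⟩ := Finset.mem_Icc.1 hl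
      rw [hgg0]
      exact ⟨hl1, by simpa using hl2, by simp⟩
    | succ s ih =>
      intro hs l hl
      obtain ⟨h1, h2, h3⟩ := ih (by omega) l hl
      have ht1 : 1 < j - s := by omega
      have ht2 : j - s ≤ k := by omega
      obtain ⟨q1, q2, q3⟩ := hparspec (j - s) (gg s l) ht1 ht2 h1 h2
      have he : j - s - 1 = j - (s+1) := by omega
      rw [he] at q2 q3
      rw [hggs]
      exact ⟨q1, q2, h3.trans q3⟩
  -- properties of g
  have Hgj : ∀ l ∈ L, g j l = l := by
    intro l _
    simp only [hg, if_neg (by omega : ¬ j = 0), Nat.sub_self, hgg0]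
  have Hg0 : ∀ l ∈ L, g 0 l = 0 := fun l _ => by simp [hg]
  have Hcompat : ∀ t l l', l ∈ L → l' ∈ L → g (t+1) l = g (t+1) l' → g t l = g t l' := by
    intro t l l' hl hl' hgt
    rcases Nat.eq_zero_or_pos t with rfl | ht
    · simp [hg]
    rcases le_or_gt (t+1) j with htj | htj
    · have hgp : ∀ u : ℕ, g t u = par (t+1) (g (t+1) u) := by
        intro u
        have he : j - t = (j - (t+1)) + 1 := by omega
        have he2 : j - (j - (t+1)) = t + 1 := by omega
        simp only [hg]
        simp only [if_neg (by omega : ¬ t = 0), if_neg (by omega : ¬ t + 1 = 0)]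
        rw [he, hggs, he2]
      rw [hgp l, hgp l', hgt]
    · have hid : ∀ u : ℕ, g (t+1) u = u := by
        intro u
        simp only [hg]
        simp only [if_neg (by omega : ¬ t + 1 = 0)]
        rw [show j - (t+1) = 0 by omega, hgg0]
      rw [hid l, hid l'] at hgt
      rw [hgt]
  have hgmem : ∀ t, 1 ≤ t → t ≤ j → ∀ l ∈ L, 1 ≤ g t l ∧ g t l ≤ m t ∧ T j l ⊆ T t (g t l) := by
    intro t ht1 ht2 l hl
    have hs : j - t ≤ j - 1 := by omega
    obtain ⟨h1, h2, h3⟩ := hinv (j - t) hs l hl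
    have he : j - (j - t) = t := by omega
    rw [he] at h2 h3
    have hgt : g t l = gg (j - t) l := by simp only [hg]; simp only [if_neg (by omega : ¬ t = 0)]
    rw [hgt]
    exact ⟨h1, h2, h3⟩
  have hV : ∀ t, 1 ≤ t → t ≤ j → ∀ l ∈ L, g t l ∈ Finset.Icc 1 (m t) := by
    intro t ht1 ht2 l hl
    obtain ⟨h1, h2, _⟩ := hgmem t ht1 ht2 l hl
    exact Finset.mem_Icc.2 ⟨h1, h2⟩
  -- the subset condition is equivalent to the grouping
  have hiff : ∀ t, 1 ≤ t → t ≤ j → ∀ v ∈ Finset.Icc 1 (m t), ∀ l ∈ L,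
      (T j l ⊆ T t v ↔ g t l = v) := by
    intro t ht1 ht2 v hv l hl
    obtain ⟨h1, h2, h3⟩ := hgmem t ht1 ht2 l hl
    obtain ⟨hv1, hv2⟩ := Finset.mem_Icc.1 hv
    obtain ⟨hl1, hl2⟩ := Finset.mem_Icc.1 hl
    constructor
    · intro hsub
      by_contra hne
      have hx : x j l ∈ T j l := hmem j l hj1 hjk hl1 hl2
      have hd := hdisj t ht1 (le_trans ht2 hjk) (g t l) v h1 h2 hv1 hv2 hne
      exact Set.disjoint_left.1 hd (h3 hx) (hsub hx)
    · intro hgv; rw [← hgv]; exact h3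
  -- distance bounds
  set d : ℕ → ℝ := fun t => if t = 0 then D else (4:ℝ) ^ (-(t:ℤ) + 1) * D with hd_def
  have hd : ∀ t, 0 ≤ d t := by
    intro t
    simp only [hd_def]
    split
    · exact hD0
    · exact mul_nonneg (le_of_lt (zpow_pos (by norm_num) _)) hD0
  have hdist : ∀ t, t < j → ∀ l ∈ L, ∀ l' ∈ L, g t l = g t l' →
      dist (x j l) (x j l') ≤ d t := by
    intro t ht l hl l' hl' hgt
    obtain ⟨hl1, hl2⟩ := Finset.mem_Icc.1 hl
    obtain ⟨hl1', hl2'⟩ := Finset.mem_Icc.1 hl'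
    have hxl : x j l ∈ T j l := hmem j l hj1 hjk hl1 hl2
    have hxl' : x j l' ∈ T j l' := hmem j l' hj1 hjk hl1' hl2'
    rcases Nat.eq_zero_or_pos t with rfl | ht1
    · have hX1 : x j l ∈ X := hTsubX j l hj1 hjk hl1 hl2 hxl
      have hX2 : x j l' ∈ X := hTsubX j l' hj1 hjk hl1' hl2' hxl'
      simp only [hd_def, if_pos rfl]
      rw [← hdiam]
      exact Metric.dist_le_diam_of_mem hXbdd hX1 hX2
    · obtain ⟨h1, h2, h3⟩ := hgmem t ht1 (le_of_lt ht) l hl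
      obtain ⟨_, _, h3'⟩ := hgmem t ht1 (le_of_lt ht) l' hl'
      rw [hgt] at h3
      have htk : t ≤ k := le_trans (le_of_lt ht) hjk
      have hb : Bornology.IsBounded (T t (g t l')) := by
        refine hXbdd.subset (hTsubX t (g t l') ht1 htk ?_ ?_)
        · exact (hgmem t ht1 (le_of_lt ht) l' hl').1
        · exact (hgmem t ht1 (le_of_lt ht) l' hl').2.1
      have hdd : dist (x j l) (x j l') ≤ Metric.diam (T t (g t l')) :=
        Metric.dist_le_diam_of_mem hb (h3 hxl) (h3' hxl')
      simp only [hd_def]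
      simp only [if_neg (by omega : ¬ t = 0)]
      refine hdd.trans (hdiamT t (g t l') ht1 htk ?_ ?_)
      · exact (hgmem t ht1 (le_of_lt ht) l' hl').1
      · exact (hgmem t ht1 (le_of_lt ht) l' hl').2.1
  -- the coupling
  set w : ℕ → ℕ → ℝ≥0 := BoissardAux3.cw L g j a b with hw
  have hrow : ∀ l ∈ L, ∑ l' ∈ L, w l l' = a l := fun l hl =>
    BoissardAux3.cw_row_sum Hgj Hg0 Hcompat hmass hl
  have hcol : ∀ l' ∈ L, ∑ l ∈ L, w l l' = b l' := fun l' hl' =>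
    BoissardAux3.cw_col_sum Hgj Hg0 Hcompat hmass hl'
  have hmain := BoissardAux6.wdist_le_of_coupling p hp L (x j) a b w hrow hcol
  refine le_trans hmain ?_
  -- bound the cost
  have hcost := BoissardAux4.cost_le (a := a) (b := b) p hp (x j) Hgj Hcompat hj1 d hd hdist
    (fun t => Finset.Icc 1 (m t)) hV
  set S : ℕ → ℝ := fun t => ∑ v ∈ Finset.Icc 1 (m t),
      |((∑ l ∈ L.filter (fun l => g t l = v), a l : ℝ≥0) : ℝ)
        - ((∑ l ∈ L.filter (fun l => g t l = v), b l : ℝ≥0) : ℝ)| with hS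
  have hS0 : ∀ t, 0 ≤ S t := fun t => Finset.sum_nonneg (fun v _ => abs_nonneg _)
  have hC0 : 0 ≤ ∑ l ∈ L, ∑ l' ∈ L, (w l l' : ℝ) * dist (x j l) (x j l') ^ p :=
    Finset.sum_nonneg (fun l _ => Finset.sum_nonneg (fun l' _ =>
      mul_nonneg (NNReal.coe_nonneg _) (Real.rpow_nonneg dist_nonneg _)))
  have hq0 : (0:ℝ) < 1/p := by positivity
  have hq1 : (1:ℝ)/p ≤ 1 := by
    rw [div_le_one hp0]; exact hp
  calc (∑ l ∈ L, ∑ l' ∈ L, (w l l' : ℝ) * dist (x j l) (x j l') ^ p) ^ (1/p)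
      ≤ (∑ t ∈ Finset.Icc 1 j, d (t-1) ^ p * S t) ^ (1/p) := by
        exact Real.rpow_le_rpow hC0 hcost (le_of_lt hq0)
    _ ≤ ∑ t ∈ Finset.Icc 1 j, (d (t-1) ^ p * S t) ^ (1/p) := by
        refine BoissardAux7.rpow_sum_le _ _ (fun t _ => ?_) hq0 hq1
        exact mul_nonneg (Real.rpow_nonneg (hd _) _) (hS0 t)
    _ ≤ ∑ t ∈ Finset.Icc 1 j,
          (2 : ℝ) ^ (1 - 1 / p) * (4 : ℝ) ^ (-(t : ℤ) + 2) * D *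
            (∑ l' ∈ Finset.Icc 1 (m t),
              |((∑ l ∈ L, (if T j l ⊆ T t l' then a l else 0) : ℝ≥0) : ℝ) -
                ((∑ l ∈ L, (if T j l ⊆ T t l' then b l else 0) : ℝ≥0) : ℝ)|) ^ (1/p) := by
        refine Finset.sum_le_sum (fun t ht => ?_)
        obtain ⟨ht1, ht2⟩ := Finset.mem_Icc.1 ht
        -- rewrite S t in terms of the subset condition
        have hSrw : ∑ l' ∈ Finset.Icc 1 (m t),
              |((∑ l ∈ L, (if T j l ⊆ T t l' then a l else 0) : ℝ≥0) : ℝ) -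
                ((∑ l ∈ L, (if T j l ⊆ T t l' then b l else 0) : ℝ≥0) : ℝ)| = S t := by
          refine Finset.sum_congr rfl (fun v hv => ?_)
          have hfa : ∀ c : ℕ → ℝ≥0, (∑ l ∈ L, (if T j l ⊆ T t v then c l else 0))
              = ∑ l ∈ L.filter (fun l => g t l = v), c l := by
            intro c
            rw [Finset.sum_filter]
            exact Finset.sum_congr rfl (fun l hl =>
              if_congr (hiff t ht1 ht2 v hv l hl) rfl rfl)
          rw [hfa a, hfa b]
        rw [hSrw]
        -- numeric comparison of the coefficients
        have hdpS : (d (t-1) ^ p * S t) ^ (1/p) = d (t-1) * S t ^ (1/p) := by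
          rw [Real.mul_rpow (Real.rpow_nonneg (hd _) _) (hS0 t)]
          congr 1
          rw [← Real.rpow_mul (hd _), mul_one_div, div_self (ne_of_gt hp0), Real.rpow_one]
        rw [hdpS]
        refine mul_le_mul_of_nonneg_right ?_ (Real.rpow_nonneg (hS0 t) _)
        have h2 : (1:ℝ) ≤ 2 ^ (1 - 1/p) := by
          have h21 : (0:ℝ) ≤ 1 - 1/p := by linarith
          calc (1:ℝ) = 2 ^ (0:ℝ) := (Real.rpow_zero 2).symm
            _ ≤ 2 ^ (1 - 1/p) := Real.rpow_le_rpow_of_exponent_le one_le_two h21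
        have hd4 : d (t-1) ≤ (4:ℝ) ^ (-(t:ℤ) + 2) * D := by
          simp only [hd_def]
          rcases eq_or_ne t 1 with rfl | ht1'
          · norm_num
            linarith
          · have htt : ¬ (t - 1 = 0) := by omega
            simp only [if_neg htt]
            have hcast : (-(↑(t-1):ℤ) + 1) = (-(t:ℤ) + 2) := by
              have h' : ((t-1:ℕ):ℤ) = (t:ℤ) - 1 := by omega
              rw [h']; ring
            rw [hcast]
        have hfin : d (t-1) ≤ 2 ^ (1-1/p) * ((4:ℝ)^(-(t:ℤ)+2) * D) :=
          le_trans hd4 (le_mul_of_one_le_left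
            (mul_nonneg (zpow_nonneg (by norm_num) _) hD0) h2)
        rw [mul_assoc]
        exact hfin
end

section
/- Let μ be a probability measure on a measurable space E, let (A_1, …, A_m) be a measurable partition of E, and let L_n = (1/n) Σ_{i=1}^n δ_{X_i} be the empirical measure of n i.i.d. samples X_1, …, X_n from μ. Then E[ Σ_{l=1}^m |L_n(A_l) − μ(A_l)| ] ≤ √(m/n). -/
open MeasureTheory ProbabilityTheory Filter
open scoped ENNReal NNReal

/-- Empirical measure `(1/n) ∑_{i=0}^{n-1} δ_{X_i ω}`. -/
noncomputable def empMeas {E Ω : Type*} [MeasurableSpace E] (X : ℕ → Ω → E) (n : ℕ) (ω : Ω) :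
    Measure E :=
  (n : ℝ≥0∞)⁻¹ • ∑ i ∈ Finset.range n, Measure.dirac (X i ω)

/-- One-set bound: `E |L_n(s) - μ s| ≤ √(μ s / n)`. -/
lemma one_set_bound {E Ω : Type*} [MeasurableSpace E]
    [MeasurableSpace Ω] (Pr : Measure Ω) [IsProbabilityMeasure Pr]
    (μ : Measure E) [IsProbabilityMeasure μ]
    {s : Set E} (hs : MeasurableSet s)
    (n : ℕ) (hn : 0 < n)
    (Xs : ℕ → Ω → E) (hmeas : ∀ i, Measurable (Xs i))
    (hiid : iIndepFun Xs Pr)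
    (hlaw : ∀ i, Measure.map (Xs i) Pr = μ) :
    ∫ ω, |(n:ℝ)⁻¹ * (∑ i ∈ Finset.range n, s.indicator (1 : E → ℝ) (Xs i ω)) -
        (μ s).toReal| ∂Pr ≤ Real.sqrt ((μ s).toReal / n) := by
  set p : ℝ := (μ s).toReal with hp
  have hp0 : 0 ≤ p := ENNReal.toReal_nonneg
  set g : E → ℝ := s.indicator 1 with hgdef
  have hgmeas : Measurable g := measurable_const.indicator hs
  set Y : ℕ → Ω → ℝ := fun i ω => g (Xs i ω) with hY
  have hYmeas : ∀ i, Measurable (Y i) := fun i => hgmeas.comp (hmeas i)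
  have hYbd : ∀ i ω, |Y i ω| ≤ 1 := by
    intro i ω
    by_cases h : Xs i ω ∈ s <;> simp [hY, hgdef, h]
  have hYmem : ∀ i, MemLp (Y i) 2 Pr := fun i =>
    (memLp_top_of_bound (hYmeas i).aestronglyMeasurable 1
      (Filter.Eventually.of_forall (hYbd i))).mono_exponent le_top
  have hYint : ∀ i, ∫ ω, Y i ω ∂Pr = p := by
    intro i
    rw [hY]
    rw [← integral_map (hmeas i).aemeasurable hgmeas.aestronglyMeasurable, hlaw i,
      hgdef, integral_indicator_one hs]
    rfl
  have hYsq : ∀ i, (Y i) ^ 2 = Y i := by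
    intro i
    funext ω
    by_cases h : Xs i ω ∈ s <;> simp [hY, hgdef, h]
  have hYvar : ∀ i, variance (Y i) Pr = p - p ^ 2 := by
    intro i
    rw [variance_eq_sub (hYmem i), hYsq i, hYint i]
  -- independence of the Y's
  have hYindep : Set.Pairwise ↑(Finset.range n) fun i j => IndepFun (Y i) (Y j) Pr := by
    intro i _ j _ hij
    exact (hiid.indepFun hij).comp hgmeas hgmeas
  set W : Ω → ℝ := fun ω => (n:ℝ)⁻¹ * ∑ i ∈ Finset.range n, Y i ω with hW
  have hWmem : MemLp W 2 Pr := by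
    have h : MemLp (∑ i ∈ Finset.range n, Y i) 2 Pr :=
      memLp_finset_sum' _ fun i _ => hYmem i
    have h2 : MemLp (fun ω => ∑ i ∈ Finset.range n, Y i ω) 2 Pr := by
      convert h using 1; ext ω; simp
    exact h2.const_mul _
  have hWint : ∫ ω, W ω ∂Pr = p := by
    rw [hW]
    simp only [integral_const_mul]
    rw [integral_finset_sum _ fun i _ => (hYmem i).integrable one_le_two]
    simp only [hYint]
    rw [Finset.sum_const, Finset.card_range, nsmul_eq_mul]
    field_simp
  have hWvar : variance W Pr ≤ p / n := by
    have h1 : variance (fun ω => ∑ i ∈ Finset.range n, Y i ω) Pr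
        = ∑ i ∈ Finset.range n, variance (Y i) Pr := by
      have := IndepFun.variance_sum (μ := Pr) (X := Y) (s := Finset.range n)
        (fun i _ => hYmem i) hYindep
      convert this using 2
      ext ω
      simp
    have h2 : variance W Pr = ((n:ℝ)⁻¹) ^ 2 * (n * (p - p ^ 2)) := by
      rw [hW]
      rw [variance_const_mul ((n:ℝ)⁻¹) _ Pr, h1]
      simp only [hYvar, Finset.sum_const, Finset.card_range, nsmul_eq_mul]
    rw [h2]
    have hnpos : (0:ℝ) < n := Nat.cast_pos.mpr hn
    have hple : p - p ^ 2 ≤ p := by nlinarith [sq_nonneg p]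
    calc ((n:ℝ)⁻¹) ^ 2 * (n * (p - p ^ 2)) = (p - p ^ 2) / n := by
          field_simp
      _ ≤ p / n := div_le_div_of_nonneg_right hple hnpos.le
  have hZmem : MemLp (fun ω => W ω - p) 2 Pr := hWmem.sub (memLp_const p)
  have hZabs : MemLp (fun ω => |W ω - p|) 2 Pr := by
    have := hZmem.abs
    convert this using 1
    ext ω; simp
  have hvarint : ∫ ω, (W ω - p) ^ 2 ∂Pr = variance W Pr := by
    rw [variance_eq_integral hWmem.aemeasurable, hWint]
  have key : (∫ ω, |W ω - p| ∂Pr) ^ 2 ≤ p / n := by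
    have h := variance_nonneg (fun ω => |W ω - p|) Pr
    rw [variance_eq_sub hZabs] at h
    have heq : ∫ ω, ((fun ω => |W ω - p|) ^ 2) ω ∂Pr = ∫ ω, (W ω - p) ^ 2 ∂Pr := by
      apply integral_congr_ae
      filter_upwards with ω
      simp [sq_abs]
    rw [show ((fun ω => |W ω - p|) ^ 2) = fun ω => ((fun ω => |W ω - p|) ^ 2) ω from rfl] at h
    calc (∫ ω, |W ω - p| ∂Pr) ^ 2 ≤ ∫ ω, ((fun ω => |W ω - p|) ^ 2) ω ∂Pr := by linarith
      _ = variance W Pr := by rw [heq, hvarint]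
      _ ≤ p / n := hWvar
  have habs_nonneg : 0 ≤ ∫ ω, |W ω - p| ∂Pr :=
    integral_nonneg fun ω => abs_nonneg _
  have hfinal : ∫ ω, |W ω - p| ∂Pr ≤ Real.sqrt (p / n) :=
    (Real.le_sqrt habs_nonneg (by positivity)).mpr key
  exact hfinal

lemma empMeas_toReal {E Ω : Type*} [MeasurableSpace E] (X : ℕ → Ω → E) (n : ℕ) (ω : Ω)
    {s : Set E} (hs : MeasurableSet s) :
    (empMeas X n ω s).toReal
      = (n:ℝ)⁻¹ * ∑ i ∈ Finset.range n, s.indicator (1 : E → ℝ) (X i ω) := by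
  simp only [empMeas, Measure.smul_apply, Measure.finset_sum_apply, smul_eq_mul,
    Measure.dirac_apply' _ hs]
  rw [ENNReal.toReal_mul, ENNReal.toReal_sum]
  · congr 1
    · simp
    · refine Finset.sum_congr rfl fun i _ => ?_
      by_cases h : X i ω ∈ s <;> simp [h]
  · intro i _
    by_cases h : X i ω ∈ s <;> simp [h]

/-- the mean total-variation discrepancy of the empirical measure over
a finite measurable partition is at most `√(m/n)`. -/
theorem empirical_tv_partition_bound
    {E Ω : Type*} [MeasurableSpace E]
    [MeasurableSpace Ω] (Pr : Measure Ω) [IsProbabilityMeasure Pr]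
    (μ : Measure E) [IsProbabilityMeasure μ]
    (m : ℕ) (A : Fin m → Set E) (hAmeas : ∀ l, MeasurableSet (A l))
    (hAdisj : ∀ l l', l ≠ l' → Disjoint (A l) (A l'))
    (hAcover : (⋃ l, A l) = Set.univ)
    (n : ℕ) (hn : 0 < n)
    (Xs : ℕ → Ω → E) (hmeas : ∀ i, Measurable (Xs i))
    (hiid : iIndepFun Xs Pr)
    (hlaw : ∀ i, Measure.map (Xs i) Pr = μ) :
    ∫ ω, ∑ l, |(empMeas Xs n ω (A l)).toReal - (μ (A l)).toReal| ∂Pr ≤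
      Real.sqrt (m / n) := by
  classical
  have hnpos : (0:ℝ) < n := Nat.cast_pos.mpr hn
  set p : Fin m → ℝ := fun l => (μ (A l)).toReal with hp
  have hp0 : ∀ l, 0 ≤ p l := fun l => ENNReal.toReal_nonneg
  -- each term integrable
  have hint : ∀ l : Fin m, Integrable (fun ω =>
      |(n:ℝ)⁻¹ * (∑ i ∈ Finset.range n, (A l).indicator (1 : E → ℝ) (Xs i ω)) - p l|) Pr := by
    intro l
    have hmeasf : Measurable (fun ω =>
        |(n:ℝ)⁻¹ * (∑ i ∈ Finset.range n, (A l).indicator (1 : E → ℝ) (Xs i ω)) - p l|) := by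
      apply Measurable.abs
      apply Measurable.sub _ measurable_const
      exact (Finset.measurable_sum _ fun i _ =>
        (measurable_const.indicator (hAmeas l)).comp (hmeas i)).const_mul _
    refine (memLp_top_of_bound hmeasf.aestronglyMeasurable (1 + p l)
      (Filter.Eventually.of_forall fun ω => ?_)).integrable le_top
    rw [Real.norm_eq_abs, abs_abs]
    have h1 : 0 ≤ (n:ℝ)⁻¹ * (∑ i ∈ Finset.range n, (A l).indicator (1 : E → ℝ) (Xs i ω)) := by
      apply mul_nonneg (by positivity)
      apply Finset.sum_nonneg
      intro i _
      exact Set.indicator_nonneg (fun _ _ => zero_le_one) _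
    have h2 : (n:ℝ)⁻¹ * (∑ i ∈ Finset.range n, (A l).indicator (1 : E → ℝ) (Xs i ω)) ≤ 1 := by
      rw [inv_mul_le_iff₀ hnpos]
      calc (∑ i ∈ Finset.range n, (A l).indicator (1 : E → ℝ) (Xs i ω))
          ≤ ∑ _i ∈ Finset.range n, (1:ℝ) := by
            apply Finset.sum_le_sum
            intro i _
            by_cases h : Xs i ω ∈ A l <;> simp [h]
        _ = n * 1 := by simp
    rw [abs_sub_le_iff]
    constructor <;> nlinarith [hp0 l]
  -- rewrite integrand and split the integral
  have hrw : ∫ ω, ∑ l, |(empMeas Xs n ω (A l)).toReal - p l| ∂Pr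
      = ∑ l, ∫ ω, |(n:ℝ)⁻¹ * (∑ i ∈ Finset.range n, (A l).indicator (1 : E → ℝ) (Xs i ω))
          - p l| ∂Pr := by
    rw [← integral_finset_sum _ fun l _ => hint l]
    apply integral_congr_ae
    filter_upwards with ω
    refine Finset.sum_congr rfl fun l _ => ?_
    rw [empMeas_toReal _ _ _ (hAmeas l)]
  rw [hrw]
  -- bound each term by √(p l / n)
  have hbd : ∀ l : Fin m, ∫ ω, |(n:ℝ)⁻¹ * (∑ i ∈ Finset.range n,
      (A l).indicator (1 : E → ℝ) (Xs i ω)) - p l| ∂Pr ≤ Real.sqrt (p l / n) :=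
    fun l => one_set_bound Pr μ (hAmeas l) n hn Xs hmeas hiid hlaw
  calc (∑ l, ∫ ω, |(n:ℝ)⁻¹ * (∑ i ∈ Finset.range n,
        (A l).indicator (1 : E → ℝ) (Xs i ω)) - p l| ∂Pr)
      ≤ ∑ l, Real.sqrt (p l / n) := Finset.sum_le_sum fun l _ => hbd l
    _ ≤ Real.sqrt (m / n) := by
        have hsum : ∑ l, p l ≤ 1 := by
          have h1 : ∑' l, μ (A l) = 1 := by
            rw [← measure_iUnion (fun l l' h => hAdisj l l' h) hAmeas, hAcover, measure_univ]
          have h2 : ∑ l, μ (A l) = 1 := by rw [← tsum_fintype (L := SummationFilter.unconditional _)]; exact h1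
          have h3 : (∑ l, μ (A l)).toReal = 1 := by rw [h2]; simp
          rw [ENNReal.toReal_sum (fun l _ => measure_ne_top μ _)] at h3
          exact le_of_eq h3
        have hnn : 0 ≤ ∑ l, Real.sqrt (p l / n) :=
          Finset.sum_nonneg fun l _ => Real.sqrt_nonneg _
        rw [Real.le_sqrt hnn (by positivity)]
        calc (∑ l, Real.sqrt (p l / n)) ^ 2
            ≤ (Finset.univ.card : ℝ) * ∑ l, Real.sqrt (p l / n) ^ 2 :=
              sq_sum_le_card_mul_sum_sq
          _ = m * ∑ l, (p l / n) := by
              rw [Finset.card_univ, Fintype.card_fin]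
              congr 1
              refine Finset.sum_congr rfl fun l _ => ?_
              rw [Real.sq_sqrt (by positivity)]
          _ ≤ m / n := by
              rw [← Finset.sum_div]
              calc (m:ℝ) * ((∑ l, p l) / n) ≤ m * (1 / n) := by
                    apply mul_le_mul_of_nonneg_left _ (Nat.cast_nonneg m)
                    exact div_le_div_of_nonneg_right hsum hnpos.le |>.trans_eq (by ring) |>.trans
                      (le_of_eq rfl)
                _ = m / n := by ring
end

section
/- Let P be a Markov kernel on a Polish space E with reversible probability measure π, and suppose a Poincaré inequality holds with constant C_P > 0, i.e. Var_π(f) ≤ C_P ∫ f (I − P²) f dπ for all f ∈ L²(π). Then for all f ∈ L²(π) and all n ≥ 0, Var_π(P^n f) ≤ λ^n Var_π(f) with λ = (C_P − 1)/C_P. -/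
open MeasureTheory ProbabilityTheory Filter
open scoped ENNReal NNReal ProbabilityTheory

/-- Action of a Markov kernel on a function: `(Pf)(x) = ∫ f(y) P(x, dy)`. -/
noncomputable def kact {E : Type*} [MeasurableSpace E] (P : Kernel E E) (f : E → ℝ) (x : E) :
    ℝ := ∫ y, f y ∂(P x)

/-- The `n`-step kernel `P^n`. -/
noncomputable def kpow {E : Type*} [MeasurableSpace E] (P : Kernel E E) : ℕ → Kernel E E
  | 0 => Kernel.id
  | n + 1 => P ∘ₖ kpow P n

section Aux

variable {E : Type*} [MeasurableSpace E]

lemma stronglyMeasurable_kact (P : Kernel E E) [IsSFiniteKernel P] {f : E → ℝ}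
    (hf : Measurable f) : StronglyMeasurable (kact P f) :=
  (hf.comp measurable_snd).stronglyMeasurable.integral_kernel_prod_right'

lemma measurable_kact (P : Kernel E E) [IsSFiniteKernel P] {f : E → ℝ}
    (hf : Measurable f) : Measurable (kact P f) :=
  (stronglyMeasurable_kact P hf).measurable

lemma my_variance_congr {X Y : E → ℝ} {μ : Measure E} (h : X =ᵐ[μ] Y) :
    variance X μ = variance Y μ := by
  unfold ProbabilityTheory.variance ProbabilityTheory.evariance
  rw [integral_congr_ae h]
  congr 1
  apply lintegral_congr_ae
  filter_upwards [h] with x hx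
  rw [hx]

lemma bind_eq_snd_compProd (μ : Measure E) [SFinite μ] (R : Kernel E E) [IsSFiniteKernel R] :
    μ.bind R = (μ ⊗ₘ R).map Prod.snd := by
  ext s hs
  rw [Measure.map_apply measurable_snd hs, Measure.compProd_apply (measurable_snd hs),
    Measure.bind_apply hs R.measurable.aemeasurable]
  rfl

lemma mul_integrable_of_memL2 {α : Type*} [MeasurableSpace α] {μ : Measure α} {f g : α → ℝ}
    (hf : MemLp f 2 μ) (hg : MemLp g 2 μ) : Integrable (fun x => f x * g x) μ := by
  rw [← memLp_one_iff_integrable]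
  have h : (1 : ℝ≥0∞) / 1 = 1 / 2 + 1 / 2 := by rw [ENNReal.add_halves]; simp
  exact MemLp.smul (r := 1) hg hf

lemma kact_id [MeasurableSingletonClass E] (f : E → ℝ) : kact Kernel.id f = f := by
  funext x
  rw [kact, Kernel.id_apply, integral_dirac]

lemma bind_comp (μ : Measure E) (P Q : Kernel E E) [IsSFiniteKernel P] [IsSFiniteKernel Q] :
    μ.bind (P ∘ₖ Q) = (μ.bind Q).bind P := by
  have h : ⇑(P ∘ₖ Q) = fun x => (Q x).bind P := funext fun x => Kernel.comp_apply P Q x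
  rw [h]
  exact (Measure.bind_bind Q.measurable.aemeasurable P.measurable.aemeasurable).symm

instance kpow_markov (P : Kernel E E) [IsMarkovKernel P] (n : ℕ) :
    IsMarkovKernel (kpow P n) := by
  induction n with
  | zero => rw [kpow]; infer_instance
  | succ n ih => rw [kpow]; infer_instance

end Aux

section Rev

variable {E : Type*} [MeasurableSpace E] (π : Measure E) [IsProbabilityMeasure π]
  (P : Kernel E E) [IsMarkovKernel P]

lemma rev_invariant (hrev : ∀ A B : Set E, MeasurableSet A → MeasurableSet B →
      ∫⁻ x in A, P x B ∂π = ∫⁻ x in B, P x A ∂π) :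
    π.bind P = π := by
  ext B hB
  rw [Measure.bind_apply hB P.measurable.aemeasurable]
  have h := hrev Set.univ B MeasurableSet.univ hB
  simpa using h

lemma rev_symm (hrev : ∀ A B : Set E, MeasurableSet A → MeasurableSet B →
      ∫⁻ x in A, P x B ∂π = ∫⁻ x in B, P x A ∂π) :
    (π ⊗ₘ P).map Prod.swap = π ⊗ₘ P := by
  refine ext_of_generate_finite _ generateFrom_prod.symm isPiSystem_prod ?_ ?_
  · rintro s ⟨A, hA, B, hB, rfl⟩
    simp only [Set.mem_setOf_eq] at hA hB
    rw [Measure.map_apply measurable_swap (hA.prod hB), Set.preimage_swap_prod,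
      Measure.compProd_apply_prod hB hA, Measure.compProd_apply_prod hA hB, hrev B A hB hA]
  · rw [Measure.map_apply measurable_swap MeasurableSet.univ]
    simp

lemma memℒp_kact (hinv : π.bind P = π) {f : E → ℝ} (hf : Measurable f)
    (hf2 : MemLp f 2 π) : MemLp (kact P f) 2 π := by
  have hsm := stronglyMeasurable_kact P hf
  have hmap : (π ⊗ₘ P).map Prod.snd = π := by rw [← bind_eq_snd_compProd, hinv]
  have hF2 : MemLp (fun p : E × E => f p.2) 2 (π ⊗ₘ P) :=
    (memLp_map_measure_iff (by rw [hmap]; exact hf2.1) measurable_snd.aemeasurable).mp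
      (by rwa [hmap])
  have hF1 : Integrable (fun p : E × E => f p.2) (π ⊗ₘ P) := hF2.integrable one_le_two
  have hFsq : Integrable (fun p : E × E => f p.2 ^ 2) (π ⊗ₘ P) :=
    (memLp_two_iff_integrable_sq hF2.aestronglyMeasurable).mp hF2
  rw [Measure.integrable_compProd_iff hFsq.aestronglyMeasurable] at hFsq
  rw [Measure.integrable_compProd_iff hF1.aestronglyMeasurable] at hF1
  obtain ⟨hae_sq, hint⟩ := hFsq
  obtain ⟨hae_f, -⟩ := hF1
  have hbound : ∀ᵐ x ∂π, ‖kact P f x ^ 2‖ ≤ ∫ y, ‖f y ^ 2‖ ∂(P x) := by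
    filter_upwards [hae_sq, hae_f] with x hx2 hx1
    have hmem : MemLp f 2 (P x) :=
      (memLp_two_iff_integrable_sq hf.aestronglyMeasurable).mpr hx2
    have hv := variance_nonneg f (P x)
    rw [variance_eq_sub hmem] at hv
    simp only [Pi.pow_apply] at hv
    have hle : kact P f x ^ 2 ≤ ∫ y, f y ^ 2 ∂(P x) := by
      simpa [kact] using hv
    calc ‖kact P f x ^ 2‖ = kact P f x ^ 2 := by
          rw [Real.norm_eq_abs, abs_of_nonneg (sq_nonneg _)]
      _ ≤ ∫ y, f y ^ 2 ∂(P x) := hle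
      _ = ∫ y, ‖f y ^ 2‖ ∂(P x) := by
          refine integral_congr_ae (Filter.Eventually.of_forall fun y => ?_)
          exact (Real.norm_of_nonneg (sq_nonneg _)).symm
  have hintsq : Integrable (fun x => kact P f x ^ 2) π :=
    Integrable.mono' hint ((hsm.measurable.pow_const 2).aestronglyMeasurable) hbound
  exact (memLp_two_iff_integrable_sq hsm.aestronglyMeasurable).mpr hintsq

lemma bilin (hrev : ∀ A B : Set E, MeasurableSet A → MeasurableSet B →
      ∫⁻ x in A, P x B ∂π = ∫⁻ x in B, P x A ∂π)
    {f g : E → ℝ} (hf : Measurable f) (hg : Measurable g)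
    (hf2 : MemLp f 2 π) (hg2 : MemLp g 2 π) :
    ∫ x, g x * kact P f x ∂π = ∫ x, f x * kact P g x ∂π := by
  have hsymm := rev_symm π P hrev
  have hfst : (π ⊗ₘ P).map Prod.fst = π := Measure.fst_compProd π P
  have hsnd : (π ⊗ₘ P).map Prod.snd = π := by
    rw [← bind_eq_snd_compProd, rev_invariant π P hrev]
  have hGF1 : MemLp (fun p : E × E => g p.1) 2 (π ⊗ₘ P) :=
    (memLp_map_measure_iff (by rw [hfst]; exact hg2.1) measurable_fst.aemeasurable).mp
      (by rwa [hfst])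
  have hFF2 : MemLp (fun p : E × E => f p.2) 2 (π ⊗ₘ P) :=
    (memLp_map_measure_iff (by rw [hsnd]; exact hf2.1) measurable_snd.aemeasurable).mp
      (by rwa [hsnd])
  have hFF1 : MemLp (fun p : E × E => f p.1) 2 (π ⊗ₘ P) :=
    (memLp_map_measure_iff (by rw [hfst]; exact hf2.1) measurable_fst.aemeasurable).mp
      (by rwa [hfst])
  have hGF2 : MemLp (fun p : E × E => g p.2) 2 (π ⊗ₘ P) :=
    (memLp_map_measure_iff (by rw [hsnd]; exact hg2.1) measurable_snd.aemeasurable).mp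
      (by rwa [hsnd])
  have hI1 : Integrable (fun p : E × E => g p.1 * f p.2) (π ⊗ₘ P) :=
    mul_integrable_of_memL2 hGF1 hFF2
  have hI2 : Integrable (fun p : E × E => f p.1 * g p.2) (π ⊗ₘ P) :=
    mul_integrable_of_memL2 hFF1 hGF2
  calc ∫ x, g x * kact P f x ∂π
      = ∫ x, ∫ y, g x * f y ∂(P x) ∂π := by
        refine integral_congr_ae (Filter.Eventually.of_forall fun x => ?_)
        exact (integral_const_mul (g x) f).symm
    _ = ∫ p : E × E, g p.1 * f p.2 ∂(π ⊗ₘ P) := (Measure.integral_compProd hI1).symm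
    _ = ∫ p : E × E, g p.2 * f p.1 ∂(π ⊗ₘ P) := by
        conv_lhs => rw [← hsymm]
        rw [integral_map measurable_swap.aemeasurable
          (by rw [hsymm]; exact hI1.aestronglyMeasurable)]
        rfl
    _ = ∫ p : E × E, f p.1 * g p.2 ∂(π ⊗ₘ P) := by
        refine integral_congr_ae (Filter.Eventually.of_forall fun p => ?_)
        ring
    _ = ∫ x, ∫ y, f x * g y ∂(P x) ∂π := Measure.integral_compProd hI2
    _ = ∫ x, f x * kact P g x ∂π := by
        refine integral_congr_ae (Filter.Eventually.of_forall fun x => ?_)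
        exact integral_const_mul (f x) g

lemma integral_kact (hrev : ∀ A B : Set E, MeasurableSet A → MeasurableSet B →
      ∫⁻ x in A, P x B ∂π = ∫⁻ x in B, P x A ∂π)
    {f : E → ℝ} (hf : Measurable f) (hf2 : MemLp f 2 π) :
    ∫ x, kact P f x ∂π = ∫ x, f x ∂π := by
  have h := bilin π P hrev hf (measurable_const (a := (1:ℝ))) hf2 (memLp_const 1)
  simpa [kact] using h

lemma step_lemma (hrev : ∀ A B : Set E, MeasurableSet A → MeasurableSet B →
      ∫⁻ x in A, P x B ∂π = ∫⁻ x in B, P x A ∂π)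
    (CP : ℝ) (hCP : 0 < CP)
    (hpoincare : ∀ f : E → ℝ, Measurable f → MemLp f 2 π →
      variance f π ≤ CP * ∫ x, f x * (f x - kact P (kact P f) x) ∂π)
    {f : E → ℝ} (hf : Measurable f) (hf2 : MemLp f 2 π) :
    variance (kact P f) π ≤ (CP - 1) / CP * variance f π := by
  set g := kact P f with hg_def
  have hg : Measurable g := measurable_kact P hf
  have hinv := rev_invariant π P hrev
  have hg2 : MemLp g 2 π := memℒp_kact π P hinv hf hf2
  have hPg : Measurable (kact P g) := measurable_kact P hg
  have hPg2 : MemLp (kact P g) 2 π := memℒp_kact π P hinv hg hg2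
  have hff : Integrable (fun x => f x * f x) π := mul_integrable_of_memL2 hf2 hf2
  have hfPg : Integrable (fun x => f x * kact P g x) π := mul_integrable_of_memL2 hf2 hPg2
  have hsplit : ∫ x, f x * (f x - kact P g x) ∂π
      = ∫ x, f x * f x ∂π - ∫ x, f x * kact P g x ∂π := by
    rw [← integral_sub hff hfPg]
    refine integral_congr_ae (Filter.Eventually.of_forall fun x => ?_)
    ring
  have hswap : ∫ x, f x * kact P g x ∂π = ∫ x, g x * g x ∂π :=
    (bilin π P hrev hf hg hf2 hg2).symm
  have hmean : ∫ x, g x ∂π = ∫ x, f x ∂π := integral_kact π P hrev hf hf2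
  have hvf := variance_eq_sub hf2
  have hvg := variance_eq_sub hg2
  simp only [Pi.pow_apply] at hvf hvg
  have hsqf : ∫ x, f x ^ 2 ∂π = ∫ x, f x * f x ∂π := by
    refine integral_congr_ae (Filter.Eventually.of_forall fun x => ?_)
    ring
  have hsqg : ∫ x, g x ^ 2 ∂π = ∫ x, g x * g x ∂π := by
    refine integral_congr_ae (Filter.Eventually.of_forall fun x => ?_)
    ring
  have hpoin := hpoincare f hf hf2
  rw [hsplit, hswap] at hpoin
  rw [hsqf] at hvf
  rw [hsqg, hmean] at hvg
  rw [div_mul_eq_mul_div, le_div_iff₀ hCP]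
  nlinarith [hpoin, hvf, hvg]

lemma kact_comp_ae (Q : Kernel E E) [IsMarkovKernel Q]
    (hQ : π.bind Q = π) (hP : π.bind P = π) {f : E → ℝ} (hf : Measurable f)
    (hf2 : MemLp f 2 π) :
    kact (P ∘ₖ Q) f =ᵐ[π] kact Q (kact P f) := by
  have hinv2 : π.bind (P ∘ₖ Q) = π := by rw [bind_comp, hQ, hP]
  have hfi : Integrable f (π.bind (P ∘ₖ Q)) := by
    rw [hinv2]; exact hf2.integrable one_le_two
  rw [bind_eq_snd_compProd] at hfi
  have hfi' : Integrable (fun p : E × E => f p.2) (π ⊗ₘ (P ∘ₖ Q)) :=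
    (integrable_map_measure hf.aestronglyMeasurable measurable_snd.aemeasurable).mp hfi
  have hae := ((Measure.integrable_compProd_iff hfi'.aestronglyMeasurable).mp hfi').1
  filter_upwards [hae] with x hx
  have hx' : Integrable f ((Q x).bind P) := by rwa [← Kernel.comp_apply]
  rw [bind_eq_snd_compProd (Q x) P] at hx'
  have hx'' : Integrable (fun p : E × E => f p.2) ((Q x) ⊗ₘ P) :=
    (integrable_map_measure hf.aestronglyMeasurable measurable_snd.aemeasurable).mp hx'
  calc kact (P ∘ₖ Q) f x = ∫ y, f y ∂((Q x).bind P) := by rw [kact, Kernel.comp_apply]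
    _ = ∫ y, f y ∂(((Q x) ⊗ₘ P).map Prod.snd) := by rw [bind_eq_snd_compProd]
    _ = ∫ p : E × E, f p.2 ∂((Q x) ⊗ₘ P) :=
        integral_map measurable_snd.aemeasurable hf.aestronglyMeasurable
    _ = ∫ z, ∫ y, f y ∂(P z) ∂(Q x) := Measure.integral_compProd hx''
    _ = kact Q (kact P f) x := rfl

lemma kpow_invariant (hinvP : π.bind P = π) : ∀ n, π.bind (kpow P n) = π := by
  intro n
  induction n with
  | zero =>
    rw [kpow]
    have h : ⇑(Kernel.id : Kernel E E) = fun x => Measure.dirac x :=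
      funext fun x => Kernel.id_apply x
    rw [h]
    exact Measure.bind_dirac
  | succ n ih =>
    rw [kpow, bind_comp, ih, hinvP]

end Rev

/-- a Poincaré inequality (with the discrete-time Dirichlet form
`∫ f (I - P²) f dπ`) for a reversible Markov kernel implies exponential decay of the
variance, `Var_π(Pⁿf) ≤ λⁿ Var_π(f)` with `λ = (C_P - 1)/C_P`. -/
theorem poincare_implies_variance_decay
    {E : Type*} [MetricSpace E] [PolishSpace E] [MeasurableSpace E] [BorelSpace E]
    (P : Kernel E E) [IsMarkovKernel P]
    (π : Measure E) [IsProbabilityMeasure π]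
    -- reversibility of π for P
    (hrev : ∀ A B : Set E, MeasurableSet A → MeasurableSet B →
      ∫⁻ x in A, P x B ∂π = ∫⁻ x in B, P x A ∂π)
    (CP : ℝ) (hCP : 0 < CP)
    -- the Poincaré inequality
    (hpoincare : ∀ f : E → ℝ, Measurable f → MemLp f 2 π →
      variance f π ≤ CP * ∫ x, f x * (f x - kact P (kact P f) x) ∂π) :
    ∀ f : E → ℝ, Measurable f → MemLp f 2 π → ∀ n : ℕ,
      variance (kact (kpow P n) f) π ≤ ((CP - 1) / CP) ^ n * variance f π := by
  intro f hf hf2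
  have hinvP : π.bind P = π := rev_invariant π P hrev
  have hinvn : ∀ n, π.bind (kpow P n) = π := kpow_invariant π P hinvP
  set lam := (CP - 1) / CP with hlam
  have hstep : ∀ g : E → ℝ, Measurable g → MemLp g 2 π →
      variance (kact P g) π ≤ lam * variance g π := fun g hg hg2 =>
    step_lemma π P hrev CP hCP hpoincare hg hg2
  set lam0 := max lam 0 with hlam0
  have key : ∀ n, ∀ g : E → ℝ, Measurable g → MemLp g 2 π →
      variance (kact (kpow P n) g) π ≤ lam0 ^ n * variance g π := by
    intro n
    induction n with
    | zero =>
      intro g hg hg2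
      rw [show kpow P 0 = (Kernel.id : Kernel E E) from rfl, kact_id g]
      simp
    | succ n ih =>
      intro g hg hg2
      have hPg : Measurable (kact P g) := measurable_kact P hg
      have hPg2 : MemLp (kact P g) 2 π := memℒp_kact π P hinvP hg hg2
      have hcong : variance (kact (kpow P (n+1)) g) π
          = variance (kact (kpow P n) (kact P g)) π := by
        rw [show kpow P (n+1) = P ∘ₖ kpow P n from rfl]
        exact my_variance_congr (kact_comp_ae π P (kpow P n) (hinvn n) hinvP hg hg2)
      rw [hcong, pow_succ]
      calc variance (kact (kpow P n) (kact P g)) π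
          ≤ lam0 ^ n * variance (kact P g) π := ih _ hPg hPg2
        _ ≤ lam0 ^ n * (lam0 * variance g π) := by
            refine mul_le_mul_of_nonneg_left ?_ (pow_nonneg (le_max_right _ _) n)
            calc variance (kact P g) π ≤ lam * variance g π := hstep g hg hg2
              _ ≤ lam0 * variance g π :=
                mul_le_mul_of_nonneg_right (le_max_left _ _) (variance_nonneg _ _)
        _ = lam0 ^ n * lam0 * variance g π := by ring
  intro n
  by_cases h0 : variance f π = 0
  · have h := key n f hf hf2
    rw [h0] at h ⊢
    simpa using h
  · have hpos : 0 < variance f π := lt_of_le_of_ne (variance_nonneg f π) (Ne.symm h0)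
    have hl : 0 ≤ lam := by
      by_contra hneg
      push_neg at hneg
      have h1 := hstep f hf hf2
      have h2 : lam * variance f π < 0 := mul_neg_of_neg_of_pos hneg hpos
      have h3 := variance_nonneg (kact P f) π
      linarith
    calc variance (kact (kpow P n) f) π ≤ lam0 ^ n * variance f π := key n f hf hf2
      _ = lam ^ n * variance f π := by rw [hlam0, max_eq_left hl]
end
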